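/- arXiv:2407.04891 — 2 statements merged into one kernel-verified Lean document; each statement's English description precedes it below -/
import Mathlib

section
/- Let S be a commutative ring, F a formal group law over S, n ≥ 2, and 1 ≤ i ≤ n−1. Then in A = R ⊗_{R^{s_i}} R one has, for all r1, r2 ∈ R, the splitting identity r1 ⊗ r2 = (r1·r2) ⊗ 1 + ((r1·∂'_i(r2)) ⊗ 1)·ξ'. In particular (the case r1 = 1), 1 ⊗ r − r ⊗ 1 = (∂'_i(r) ⊗ 1)·ξ' for every r ∈ R. -/
/- Common setup: substitution of multivariate power series, formal group laws,
formal inverses, and the variable–swapping operation. -/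

open MvPowerSeries Finsupp

noncomputable section

variable {S : Type*} [CommRing S]

/-- Substitution of a family of multivariate power series (each intended to have zero
constant coefficient) into a power series in `k` variables.  When every `a j` has zero
constant coefficient, the coefficient of a monomial `m` of the substituted series only
receives contributions from exponents `d` with `d j ≤ deg m`, so the finite sum below
computes the genuine substitution. -/
noncomputable def msubst {k n : ℕ} (a : Fin k → MvPowerSeries (Fin n) S)
    (F : MvPowerSeries (Fin k) S) : MvPowerSeries (Fin n) S :=
  fun m =>
    ∑ d ∈ Finset.Iic (equivFunOnFinite.symm fun _ : Fin k => m.sum fun _ e => e),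
      MvPowerSeries.coeff d F * MvPowerSeries.coeff m (∏ j, a j ^ d j)

/-- `F ∈ S[[x,y]]` is a (one-dimensional, commutative) formal group law over `S`:
zero constant coefficient, commutativity `F(x,y) = F(y,x)`, unitality `F(x,0) = x`,
and associativity `F(F(x,y),z) = F(x,F(y,z))`. -/
def IsFormalGroupLaw (F : MvPowerSeries (Fin 2) S) : Prop :=
  MvPowerSeries.constantCoeff F = 0 ∧
  msubst ![(X 1 : MvPowerSeries (Fin 2) S), X 0] F = F ∧
  msubst ![(X 0 : MvPowerSeries (Fin 2) S), 0] F = X 0 ∧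
  msubst ![msubst ![(X 0 : MvPowerSeries (Fin 3) S), X 1] F, X 2] F
    = msubst ![(X 0 : MvPowerSeries (Fin 3) S), msubst ![(X 1 : MvPowerSeries (Fin 3) S), X 2] F] F

/-- `ι ∈ S[[x]]` is the formal inverse of `F`: it has zero constant coefficient
and `F(x, ι(x)) = 0`. -/
def IsFormalInverse (F : MvPowerSeries (Fin 2) S) (ι : MvPowerSeries (Fin 1) S) : Prop :=
  MvPowerSeries.constantCoeff ι = 0 ∧
  msubst ![(X 0 : MvPowerSeries (Fin 1) S), ι] F = 0

/-- `ι(b)`, the substitution of `b` into the formal inverse `ι`. -/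
noncomputable def fneg (ι : MvPowerSeries (Fin 1) S) {n : ℕ}
    (b : MvPowerSeries (Fin n) S) : MvPowerSeries (Fin n) S :=
  msubst ![b] ι

/-- `a −_F b := F(a, ι(b))`. -/
noncomputable def fsub (F : MvPowerSeries (Fin 2) S) (ι : MvPowerSeries (Fin 1) S) {n : ℕ}
    (a b : MvPowerSeries (Fin n) S) : MvPowerSeries (Fin n) S :=
  msubst ![a, fneg ι b] F

/-- Substitution `g(a,b)` of two power series into a two-variable power series `g`. -/
noncomputable def gsub (g : MvPowerSeries (Fin 2) S) {n : ℕ}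
    (a b : MvPowerSeries (Fin n) S) : MvPowerSeries (Fin n) S :=
  msubst ![a, b] g

/-- The map on multivariate power series interchanging the variables `x_i` and `x_j`
(the renaming along the transposition `(i,j)`). -/
def swapVars {n : ℕ} (i j : Fin n) (f : MvPowerSeries (Fin n) S) :
    MvPowerSeries (Fin n) S :=
  fun m => f (equivMapDomain (Equiv.swap i j) m)

theorem swapVars_coeff {n : ℕ} (i j : Fin n) (f : MvPowerSeries (Fin n) S) (m : Fin n →₀ ℕ) :
    MvPowerSeries.coeff m (swapVars i j f)
      = MvPowerSeries.coeff (equivMapDomain (Equiv.swap i j) m) f := rfl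

theorem equivMapDomain_swap_invol {n : ℕ} (i j : Fin n) (m : Fin n →₀ ℕ) :
    equivMapDomain (Equiv.swap i j) (equivMapDomain (Equiv.swap i j) m) = m := by
  rw [← equivMapDomain_trans, Equiv.swap_swap, equivMapDomain_refl]

theorem equivMapDomain_add' {n : ℕ} (e : Fin n ≃ Fin n) (a b : Fin n →₀ ℕ) :
    equivMapDomain e (a + b) = equivMapDomain e a + equivMapDomain e b := by
  ext x; simp [equivMapDomain_apply]

theorem swapVars_add {n : ℕ} (i j : Fin n) (f h : MvPowerSeries (Fin n) S) :
    swapVars i j (f + h) = swapVars i j f + swapVars i j h := rfl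

theorem swapVars_mul {n : ℕ} (i j : Fin n) (f h : MvPowerSeries (Fin n) S) :
    swapVars i j (f * h) = swapVars i j f * swapVars i j h := by
  ext m
  rw [swapVars_coeff, MvPowerSeries.coeff_mul, MvPowerSeries.coeff_mul]
  refine Finset.sum_nbij'
    (fun p => (equivMapDomain (Equiv.swap i j) p.1, equivMapDomain (Equiv.swap i j) p.2))
    (fun p => (equivMapDomain (Equiv.swap i j) p.1, equivMapDomain (Equiv.swap i j) p.2))
    ?_ ?_ ?_ ?_ ?_
  · intro p hp
    rw [Finset.HasAntidiagonal.mem_antidiagonal] at hp ⊢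
    rw [← equivMapDomain_add', hp, equivMapDomain_swap_invol]
  · intro p hp
    rw [Finset.HasAntidiagonal.mem_antidiagonal] at hp ⊢
    rw [← equivMapDomain_add', hp]
  · intro p _; simp [equivMapDomain_swap_invol]
  · intro p _; simp [equivMapDomain_swap_invol]
  · intro p _
    rw [swapVars_coeff, swapVars_coeff, equivMapDomain_swap_invol, equivMapDomain_swap_invol]

theorem swapVars_C {n : ℕ} (i j : Fin n) (s : S) :
    swapVars i j (MvPowerSeries.C s : MvPowerSeries (Fin n) S) = (MvPowerSeries.C s : MvPowerSeries (Fin n) S) := by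
  ext m
  rw [swapVars_coeff, MvPowerSeries.coeff_C, MvPowerSeries.coeff_C]
  by_cases hm : m = 0
  · subst hm; rw [equivMapDomain_zero]
  · rw [if_neg, if_neg hm]
    intro hc
    apply hm
    have := congrArg (equivMapDomain (Equiv.swap i j)) hc
    rwa [equivMapDomain_swap_invol, equivMapDomain_zero] at this

theorem swapVars_one {n : ℕ} (i j : Fin n) :
    swapVars i j (1 : MvPowerSeries (Fin n) S) = 1 := by
  have := swapVars_C (S := S) i j 1
  rwa [map_one] at this

/-- The fixed subalgebra `R^{s_i}` of power series invariant under interchanging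
the variables `x_i` and `x_j`. -/
noncomputable def fixedSubalgebra (S : Type*) [CommRing S] {n : ℕ} (i j : Fin n) :
    Subalgebra S (MvPowerSeries (Fin n) S) where
  carrier := {f | swapVars i j f = f}
  mul_mem' := by
    intro a b ha hb
    simp only [Set.mem_setOf_eq] at *
    rw [swapVars_mul, ha, hb]
  add_mem' := by
    intro a b ha hb
    simp only [Set.mem_setOf_eq] at *
    rw [swapVars_add, ha, hb]
  algebraMap_mem' := fun s => swapVars_C i j s

/-- `s_i` as an algebra homomorphism over the fixed subalgebra. -/
noncomputable def swapAlgHom (S : Type*) [CommRing S] {n : ℕ} (i j : Fin n) :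
    MvPowerSeries (Fin n) S →ₐ[fixedSubalgebra S i j] MvPowerSeries (Fin n) S where
  toFun := swapVars i j
  map_one' := swapVars_one i j
  map_mul' := swapVars_mul i j
  map_zero' := rfl
  map_add' := swapVars_add i j
  commutes' := fun r => r.2

open TensorProduct in
/-- The elementary Bott–Samelson bimodule `A = R ⊗_{R^{s_i}} R`. -/
noncomputable abbrev BSB (S : Type*) [CommRing S] {n : ℕ} (i j : Fin n) : Type _ :=
  (MvPowerSeries (Fin n) S) ⊗[fixedSubalgebra S i j] (MvPowerSeries (Fin n) S)

/-- The multiplication map `μ : A → R`, `r1 ⊗ r2 ↦ r1·r2`. -/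
noncomputable def mulHom (S : Type*) [CommRing S] {n : ℕ} (i j : Fin n) :
    BSB S i j →ₐ[fixedSubalgebra S i j] MvPowerSeries (Fin n) S :=
  Algebra.TensorProduct.productMap (AlgHom.id _ _) (AlgHom.id _ _)

/-- The twisted multiplication map `μ_s : A → R`, `r1 ⊗ r2 ↦ r1·s_i(r2)`. -/
noncomputable def mulsHom (S : Type*) [CommRing S] {n : ℕ} (i j : Fin n) :
    BSB S i j →ₐ[fixedSubalgebra S i j] MvPowerSeries (Fin n) S :=
  Algebra.TensorProduct.productMap (AlgHom.id _ _) (swapAlgHom S i j)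

open TensorProduct in
/-- The element `ξ = x_i⊗1 −_F 1⊗x_{i+1} := (g(x_i,x_j)⁻¹ ⊗ 1)·(1 ⊗ x_i − x_j ⊗ 1)` of `A`. -/
noncomputable def xiElt (g : MvPowerSeries (Fin 2) S) {n : ℕ} (i j : Fin n) : BSB S i j :=
  (Ring.inverse (gsub g (X i) (X j)) ⊗ₜ[fixedSubalgebra S i j] (1 : MvPowerSeries (Fin n) S)) *
    ((1 : MvPowerSeries (Fin n) S) ⊗ₜ[fixedSubalgebra S i j] (X i)
      - (X j) ⊗ₜ[fixedSubalgebra S i j] (1 : MvPowerSeries (Fin n) S))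

open TensorProduct in
/-- The element `ξ' = x_{i+1}⊗1 −_F 1⊗x_{i+1} := (g(x_j,x_i)⁻¹ ⊗ 1)·(1 ⊗ x_i − x_i ⊗ 1)` of `A`. -/
noncomputable def xiElt' (g : MvPowerSeries (Fin 2) S) {n : ℕ} (i j : Fin n) : BSB S i j :=
  (Ring.inverse (gsub g (X j) (X i)) ⊗ₜ[fixedSubalgebra S i j] (1 : MvPowerSeries (Fin n) S)) *
    ((1 : MvPowerSeries (Fin n) S) ⊗ₜ[fixedSubalgebra S i j] (X i)
      - (X i) ⊗ₜ[fixedSubalgebra S i j] (1 : MvPowerSeries (Fin n) S))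

open TensorProduct

namespace FGLaux


/-- total degree of a monomial -/
def dg {n : ℕ} (m : Fin n →₀ ℕ) : ℕ := m.sum fun _ e => e

def cb (k : ℕ) {n : ℕ} (m : Fin n →₀ ℕ) : Fin k →₀ ℕ :=
  equivFunOnFinite.symm fun _ : Fin k => dg m

theorem msubst_def {k n : ℕ} (a : Fin k → MvPowerSeries (Fin n) S)
    (F : MvPowerSeries (Fin k) S) (m : Fin n →₀ ℕ) :
    MvPowerSeries.coeff m (msubst a F)
      = ∑ d ∈ Finset.Iic (cb k m),
          MvPowerSeries.coeff d F * MvPowerSeries.coeff m (∏ j, a j ^ d j) := rfl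

theorem dg_add {n : ℕ} (a b : Fin n →₀ ℕ) : dg (a + b) = dg a + dg b :=
  Finsupp.sum_add_index' (fun _ => rfl) (fun _ _ _ => rfl)

theorem dg_eq_zero {n : ℕ} {m : Fin n →₀ ℕ} (h : dg m = 0) : m = 0 := by
  have h' : ∑ a ∈ m.support, m a = 0 := h
  rw [Finset.sum_eq_zero_iff] at h'
  ext s
  by_cases hs : s ∈ m.support
  · exact h' s hs
  · simpa using Finsupp.notMem_support_iff.mp hs

/-- `f` has order at least `N`. -/
def LowOrder {n : ℕ} (N : ℕ) (f : MvPowerSeries (Fin n) S) : Prop :=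
  ∀ m : Fin n →₀ ℕ, dg m < N → MvPowerSeries.coeff m f = 0

theorem LowOrder.mul {n : ℕ} {N M : ℕ} {f g : MvPowerSeries (Fin n) S}
    (hf : LowOrder N f) (hg : LowOrder M g) : LowOrder (N + M) (f * g) := by
  intro m hm
  rw [MvPowerSeries.coeff_mul]
  refine Finset.sum_eq_zero fun p hp => ?_
  rw [Finset.HasAntidiagonal.mem_antidiagonal] at hp
  have : dg p.1 + dg p.2 < N + M := by rw [← dg_add, hp]; exact hm
  rcases Nat.lt_or_ge (dg p.1) N with h | h
  · rw [hf _ h, zero_mul]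
  · rw [hg _ (by omega), mul_zero]

theorem LowOrder.pow {n : ℕ} {f : MvPowerSeries (Fin n) S} (hf : LowOrder 1 f) (e : ℕ) :
    LowOrder e (f ^ e) := by
  induction e with
  | zero => intro m hm; omega
  | succ e ih => rw [pow_succ]; exact ih.mul hf

theorem lowOrder_one {n : ℕ} {f : MvPowerSeries (Fin n) S}
    (hf : MvPowerSeries.constantCoeff f = 0) : LowOrder 1 f := by
  intro m hm
  have : m = 0 := dg_eq_zero (by omega)
  subst this
  simpa [MvPowerSeries.coeff_zero_eq_constantCoeff] using hf

theorem lowOrder_prod {k n : ℕ} {a : Fin k → MvPowerSeries (Fin n) S}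
    (ha : ∀ j, MvPowerSeries.constantCoeff (a j) = 0) (d : Fin k →₀ ℕ) :
    LowOrder (∑ j, d j) (∏ j, a j ^ d j) := by
  classical
  induction (Finset.univ : Finset (Fin k)) using Finset.cons_induction with
  | empty => intro m hm; rw [Finset.sum_empty] at hm; omega
  | cons s t hst ih =>
      rw [Finset.sum_cons, Finset.prod_cons]
      exact ((lowOrder_one (ha s)).pow (d s)).mul ih

theorem coeff_prod_pow_eq_zero {k n : ℕ} {a : Fin k → MvPowerSeries (Fin n) S}
    (ha : ∀ j, MvPowerSeries.constantCoeff (a j) = 0) {d : Fin k →₀ ℕ}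
    {m : Fin n →₀ ℕ} (h : ¬ d ≤ cb k m) :
    MvPowerSeries.coeff m (∏ j, a j ^ d j) = 0 := by
  rw [Finsupp.le_def] at h
  push_neg at h
  obtain ⟨s, hs⟩ := h
  have hcb : cb k m s = dg m := rfl
  rw [hcb] at hs
  refine lowOrder_prod ha d m ?_
  calc dg m < d s := hs
    _ ≤ ∑ j, d j := Finset.single_le_sum (fun _ _ => Nat.zero_le _) (Finset.mem_univ s)

theorem coeff_msubst {k n : ℕ} {a : Fin k → MvPowerSeries (Fin n) S}
    (ha : ∀ j, MvPowerSeries.constantCoeff (a j) = 0)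
    (F : MvPowerSeries (Fin k) S) (m : Fin n →₀ ℕ) {T : Finset (Fin k →₀ ℕ)}
    (hT : Finset.Iic (cb k m) ⊆ T) :
    MvPowerSeries.coeff m (msubst a F)
      = ∑ d ∈ T, MvPowerSeries.coeff d F * MvPowerSeries.coeff m (∏ j, a j ^ d j) := by
  rw [msubst_def]
  refine Finset.sum_subset hT fun d _ hd => ?_
  rw [coeff_prod_pow_eq_zero ha (by simpa using hd), mul_zero]

theorem Iic_zero {k : ℕ} : Finset.Iic (0 : Fin k →₀ ℕ) = {0} := by
  ext d
  simp only [Finset.mem_Iic, Finset.mem_singleton]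
  constructor
  · intro h; ext s; exact Nat.le_zero.mp (h s)
  · intro h; subst h; exact le_refl _

theorem msubst_one {k n : ℕ} (a : Fin k → MvPowerSeries (Fin n) S) :
    msubst a (1 : MvPowerSeries (Fin k) S) = 1 := by
  ext m
  rw [msubst_def]
  rw [Finset.sum_eq_single 0]
  · simp [MvPowerSeries.coeff_one]
  · intro d _ hd
    rw [MvPowerSeries.coeff_one, if_neg hd, zero_mul]
  · intro h
    exact absurd (Finset.mem_Iic.mpr zero_le) h

theorem msubst_add {k n : ℕ} (a : Fin k → MvPowerSeries (Fin n) S)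
    (F G : MvPowerSeries (Fin k) S) :
    msubst a (F + G) = msubst a F + msubst a G := by
  ext m
  rw [map_add, msubst_def, msubst_def, msubst_def, ← Finset.sum_add_distrib]
  refine Finset.sum_congr rfl fun d _ => ?_
  rw [map_add, add_mul]

theorem msubst_X {k n : ℕ} {a : Fin k → MvPowerSeries (Fin n) S}
    (ha : ∀ j, MvPowerSeries.constantCoeff (a j) = 0) (t : Fin k) :
    msubst a (X t) = a t := by
  classical
  ext m
  by_cases hm : Finsupp.single t 1 ≤ cb k m
  · rw [coeff_msubst ha _ _ (le_refl _), Finset.sum_eq_single (Finsupp.single t 1)]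
    · rw [MvPowerSeries.coeff_X, if_pos rfl, one_mul]
      congr 1
      rw [Finset.prod_eq_single t]
      · simp
      · intro j _ hj; simp [Finsupp.single_apply, Ne.symm hj]
      · simp
    · intro d _ hd
      rw [MvPowerSeries.coeff_X, if_neg hd, zero_mul]
    · intro h; exact absurd (Finset.mem_Iic.mpr hm) h
  · -- then dg m = 0, so m = 0
    have h1 : cb k m t < 1 := by
      by_contra h; exact hm (by
        intro s
        rw [Finsupp.single_apply]
        split
        · next h' => subst h'; omega
        · exact Nat.zero_le _)
    have hdg : dg m = 0 := by
      have : cb k m t = dg m := rfl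
      omega
    have hm0 : m = 0 := by
      have h' : ∑ s ∈ m.support, m s = 0 := hdg
      rw [Finset.sum_eq_zero_iff] at h'
      ext s
      by_cases hs : s ∈ m.support
      · exact h' s hs
      · simpa using Finsupp.notMem_support_iff.mp hs
    subst hm0
    rw [msubst_def]
    have hIic : Finset.Iic (cb k (0 : Fin n →₀ ℕ)) = {0} := by
      have hc : cb k (0 : Fin n →₀ ℕ) = 0 := by ext s; rfl
      rw [hc]; exact Iic_zero
    rw [hIic, Finset.sum_singleton]
    have h2 : MvPowerSeries.coeff (0 : Fin n →₀ ℕ) (a t) = 0 := by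
      rw [MvPowerSeries.coeff_zero_eq_constantCoeff]; exact ha t
    have h3 : MvPowerSeries.coeff (0 : Fin k →₀ ℕ) (X t : MvPowerSeries (Fin k) S) = 0 := by
      rw [MvPowerSeries.coeff_zero_eq_constantCoeff]; exact MvPowerSeries.constantCoeff_X t
    rw [h2, h3, zero_mul]

theorem constantCoeff_msubst {k n : ℕ} (a : Fin k → MvPowerSeries (Fin n) S)
    (F : MvPowerSeries (Fin k) S) :
    MvPowerSeries.constantCoeff (msubst a F)
      = MvPowerSeries.constantCoeff F := by
  rw [← MvPowerSeries.coeff_zero_eq_constantCoeff, msubst_def]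
  have h0 : Finset.Iic (cb k (0 : Fin n →₀ ℕ)) = {0} := by
    have : cb k (0 : Fin n →₀ ℕ) = 0 := by ext s; rfl
    rw [this]; exact Iic_zero
  rw [h0, Finset.sum_singleton]
  simp [MvPowerSeries.coeff_zero_eq_constantCoeff]

theorem prod_pow_add {k n : ℕ} (a : Fin k → MvPowerSeries (Fin n) S) (d1 d2 : Fin k →₀ ℕ) :
    (∏ j, a j ^ (d1 + d2) j) = (∏ j, a j ^ d1 j) * (∏ j, a j ^ d2 j) := by
  rw [← Finset.prod_mul_distrib]
  refine Finset.prod_congr rfl fun j _ => ?_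
  rw [Finsupp.add_apply, pow_add]

theorem cb_mono {k n : ℕ} {m1 m2 : Fin n →₀ ℕ} (h : dg m1 ≤ dg m2) :
    Finset.Iic (cb k m1) ⊆ Finset.Iic (cb k m2) := by
  apply Finset.Iic_subset_Iic.mpr
  intro s
  exact h

theorem msubst_mul {k n : ℕ} {a : Fin k → MvPowerSeries (Fin n) S}
    (ha : ∀ j, MvPowerSeries.constantCoeff (a j) = 0)
    (P Q : MvPowerSeries (Fin k) S) :
    msubst a (P * Q) = msubst a P * msubst a Q := by
  classical
  ext m
  set c := cb k m with hc
  set f : (Fin k →₀ ℕ) × (Fin k →₀ ℕ) → S := fun p =>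
    MvPowerSeries.coeff p.1 P * MvPowerSeries.coeff p.2 Q
      * MvPowerSeries.coeff m (∏ j, a j ^ (p.1 + p.2) j) with hf
  have hdisj : (↑(Finset.Iic c) : Set (Fin k →₀ ℕ)).PairwiseDisjoint Finset.HasAntidiagonal.antidiagonal := by
    intro d1 _ d2 _ hne
    simp only [Function.onFun, Finset.disjoint_left]
    intro p hp1 hp2
    rw [Finset.HasAntidiagonal.mem_antidiagonal] at hp1 hp2
    exact hne (hp1 ▸ hp2)
  have L1 : MvPowerSeries.coeff m (msubst a (P * Q))
      = ∑ p ∈ (Finset.Iic c).biUnion Finset.HasAntidiagonal.antidiagonal, f p := by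
    rw [msubst_def, Finset.sum_biUnion hdisj]
    refine Finset.sum_congr rfl fun d _ => ?_
    rw [MvPowerSeries.coeff_mul, Finset.sum_mul]
    refine Finset.sum_congr rfl fun p hp => ?_
    rw [Finset.HasAntidiagonal.mem_antidiagonal] at hp
    rw [hf]
    simp only
    rw [hp, mul_assoc]
  have hsub : (Finset.Iic c).biUnion Finset.HasAntidiagonal.antidiagonal ⊆ Finset.Iic c ×ˢ Finset.Iic c := by
    intro p hp
    rw [Finset.mem_biUnion] at hp
    obtain ⟨d, hd, hp⟩ := hp
    rw [Finset.HasAntidiagonal.mem_antidiagonal] at hp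
    rw [Finset.mem_Iic] at hd
    rw [Finset.mem_product, Finset.mem_Iic, Finset.mem_Iic]
    subst hp
    constructor
    · exact le_trans (Finsupp.le_def.mpr fun s => by simp) hd
    · exact le_trans (Finsupp.le_def.mpr fun s => by simp) hd
  have L2 : ∑ p ∈ (Finset.Iic c).biUnion Finset.HasAntidiagonal.antidiagonal, f p
      = ∑ p ∈ Finset.Iic c ×ˢ Finset.Iic c, f p := by
    refine Finset.sum_subset hsub fun p hp hnp => ?_
    have hle : ¬ p.1 + p.2 ≤ c := by
      intro hle
      exact hnp (Finset.mem_biUnion.mpr ⟨p.1 + p.2, Finset.mem_Iic.mpr hle,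
        Finset.HasAntidiagonal.mem_antidiagonal.mpr rfl⟩)
    rw [hf]
    simp only
    rw [coeff_prod_pow_eq_zero ha hle, mul_zero]
  have R1 : MvPowerSeries.coeff m (msubst a P * msubst a Q)
      = ∑ p ∈ Finset.Iic c ×ˢ Finset.Iic c, f p := by
    rw [MvPowerSeries.coeff_mul]
    calc ∑ p ∈ Finset.HasAntidiagonal.antidiagonal m,
          MvPowerSeries.coeff p.1 (msubst a P) * MvPowerSeries.coeff p.2 (msubst a Q)
        = ∑ p ∈ Finset.HasAntidiagonal.antidiagonal m, ∑ d1 ∈ Finset.Iic c, ∑ d2 ∈ Finset.Iic c,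
            (MvPowerSeries.coeff d1 P * MvPowerSeries.coeff p.1 (∏ j, a j ^ d1 j))
              * (MvPowerSeries.coeff d2 Q * MvPowerSeries.coeff p.2 (∏ j, a j ^ d2 j)) := by
          refine Finset.sum_congr rfl fun p hp => ?_
          rw [Finset.HasAntidiagonal.mem_antidiagonal] at hp
          have hd1 : dg p.1 ≤ dg m := by rw [← hp, dg_add]; omega
          have hd2 : dg p.2 ≤ dg m := by rw [← hp, dg_add]; omega
          rw [coeff_msubst ha P p.1 (cb_mono hd1), coeff_msubst ha Q p.2 (cb_mono hd2),
            Finset.sum_mul_sum]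
      _ = ∑ d1 ∈ Finset.Iic c, ∑ d2 ∈ Finset.Iic c, ∑ p ∈ Finset.HasAntidiagonal.antidiagonal m,
            (MvPowerSeries.coeff d1 P * MvPowerSeries.coeff p.1 (∏ j, a j ^ d1 j))
              * (MvPowerSeries.coeff d2 Q * MvPowerSeries.coeff p.2 (∏ j, a j ^ d2 j)) := by
          rw [Finset.sum_comm]
          refine Finset.sum_congr rfl fun d1 _ => ?_
          rw [Finset.sum_comm]
      _ = ∑ d1 ∈ Finset.Iic c, ∑ d2 ∈ Finset.Iic c, f (d1, d2) := by
          refine Finset.sum_congr rfl fun d1 _ => Finset.sum_congr rfl fun d2 _ => ?_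
          rw [hf]
          simp only
          rw [prod_pow_add, MvPowerSeries.coeff_mul, Finset.mul_sum]
          exact Finset.sum_congr rfl fun p _ => by ring
      _ = ∑ p ∈ Finset.Iic c ×ˢ Finset.Iic c, f p := (Finset.sum_product _ _ _).symm
  rw [L1, L2, R1]

theorem msubst_zero {k n : ℕ} (a : Fin k → MvPowerSeries (Fin n) S) :
    msubst a (0 : MvPowerSeries (Fin k) S) = 0 := by
  ext m
  rw [msubst_def]
  simp

/-- `msubst` (with zero-constant-coefficient substituents) as a ring homomorphism. -/
noncomputable def msubstRingHom {k n : ℕ} (a : Fin k → MvPowerSeries (Fin n) S)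
    (ha : ∀ j, MvPowerSeries.constantCoeff (a j) = 0) :
    MvPowerSeries (Fin k) S →+* MvPowerSeries (Fin n) S where
  toFun := msubst a
  map_one' := msubst_one a
  map_mul' := msubst_mul ha
  map_zero' := msubst_zero a
  map_add' := msubst_add a

theorem dg_le_of_le {l : ℕ} {e : Fin l →₀ ℕ} {m : Fin l →₀ ℕ} : True := trivial

theorem dg_eq_sum {l : ℕ} (e : Fin l →₀ ℕ) : dg e = ∑ s, e s :=
  Finsupp.sum_fintype _ _ (fun _ => rfl)

theorem msubst_comp {k l n : ℕ} {a : Fin k → MvPowerSeries (Fin l) S}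
    (ha : ∀ j, MvPowerSeries.constantCoeff (a j) = 0)
    {b : Fin l → MvPowerSeries (Fin n) S}
    (hb : ∀ s, MvPowerSeries.constantCoeff (b s) = 0)
    (F : MvPowerSeries (Fin k) S) :
    msubst b (msubst a F) = msubst (fun j => msubst b (a j)) F := by
  classical
  ext m
  set N : ℕ := (l + 1) * dg m with hN
  set B : Fin k →₀ ℕ := equivFunOnFinite.symm fun _ : Fin k => N with hB
  have hBval : ∀ s : Fin k, B s = N := fun s => rfl
  have hsub1 : Finset.Iic (cb k m) ⊆ Finset.Iic B := by
    apply Finset.Iic_subset_Iic.mpr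
    intro s
    rw [hBval]
    have : cb k m s = dg m := rfl
    rw [this, hN]
    nlinarith
  have hab : ∀ j, MvPowerSeries.constantCoeff (msubst b (a j)) = 0 := by
    intro j
    rw [constantCoeff_msubst]
    exact ha j
  have key : ∀ e ∈ Finset.Iic (cb l m), Finset.Iic (cb k e) ⊆ Finset.Iic B := by
    intro e he
    rw [Finset.mem_Iic] at he
    apply Finset.Iic_subset_Iic.mpr
    intro s
    rw [hBval]
    have h1 : cb k e s = dg e := rfl
    rw [h1, dg_eq_sum, hN]
    have h2 : ∀ t : Fin l, e t ≤ dg m := fun t => he t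
    calc ∑ t, e t ≤ ∑ _t : Fin l, dg m := Finset.sum_le_sum fun t _ => h2 t
      _ = l * dg m := by rw [Finset.sum_const, Finset.card_univ, Fintype.card_fin, smul_eq_mul]
      _ ≤ (l + 1) * dg m := by nlinarith
  calc MvPowerSeries.coeff m (msubst b (msubst a F))
      = ∑ e ∈ Finset.Iic (cb l m), MvPowerSeries.coeff e (msubst a F)
          * MvPowerSeries.coeff m (∏ s, b s ^ e s) := msubst_def _ _ _
    _ = ∑ e ∈ Finset.Iic (cb l m), (∑ d ∈ Finset.Iic B, MvPowerSeries.coeff d F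
          * MvPowerSeries.coeff e (∏ j, a j ^ d j))
          * MvPowerSeries.coeff m (∏ s, b s ^ e s) := by
        refine Finset.sum_congr rfl fun e he => ?_
        rw [coeff_msubst ha F e (key e he)]
    _ = ∑ d ∈ Finset.Iic B, MvPowerSeries.coeff d F
          * ∑ e ∈ Finset.Iic (cb l m), MvPowerSeries.coeff e (∏ j, a j ^ d j)
              * MvPowerSeries.coeff m (∏ s, b s ^ e s) := by
        have step : ∀ e : Fin l →₀ ℕ,
            (∑ d ∈ Finset.Iic B, MvPowerSeries.coeff d F
                * MvPowerSeries.coeff e (∏ j, a j ^ d j))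
              * MvPowerSeries.coeff m (∏ s, b s ^ e s)
            = ∑ d ∈ Finset.Iic B, MvPowerSeries.coeff d F
                * (MvPowerSeries.coeff e (∏ j, a j ^ d j)
                    * MvPowerSeries.coeff m (∏ s, b s ^ e s)) := fun e => by
          rw [Finset.sum_mul]
          exact Finset.sum_congr rfl fun d _ => by ring
        rw [Finset.sum_congr rfl fun e _ => step e, Finset.sum_comm]
        exact Finset.sum_congr rfl fun d _ => (Finset.mul_sum _ _ _).symm
    _ = ∑ d ∈ Finset.Iic B, MvPowerSeries.coeff d F
          * MvPowerSeries.coeff m (msubst b (∏ j, a j ^ d j)) := by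
        refine Finset.sum_congr rfl fun d _ => ?_
        rw [msubst_def]
    _ = ∑ d ∈ Finset.Iic B, MvPowerSeries.coeff d F
          * MvPowerSeries.coeff m (∏ j, (msubst b (a j)) ^ d j) := by
        refine Finset.sum_congr rfl fun d _ => ?_
        congr 1
        have : msubst b (∏ j, a j ^ d j) = ∏ j, (msubst b (a j)) ^ d j := by
          rw [show msubst b (∏ j, a j ^ d j) = msubstRingHom b hb (∏ j, a j ^ d j) from rfl,
            map_prod]
          refine Finset.prod_congr rfl fun j _ => ?_
          rw [map_pow]
          rfl
        rw [this]
    _ = MvPowerSeries.coeff m (msubst (fun j => msubst b (a j)) F) :=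
        (coeff_msubst hab F m hsub1).symm



theorem X_sub_X_regular {n : ℕ} {i j : Fin n} (hij : i ≠ j) {f : MvPowerSeries (Fin n) S}
    (h : ((X j : MvPowerSeries (Fin n) S) - X i) * f = 0) : f = 0 := by
  classical
  have hXf : ∀ m : Fin n →₀ ℕ,
      MvPowerSeries.coeff m ((X j : MvPowerSeries (Fin n) S) * f)
        = MvPowerSeries.coeff m ((X i : MvPowerSeries (Fin n) S) * f) := by
    intro m
    have : (X j : MvPowerSeries (Fin n) S) * f = X i * f := by
      rw [← sub_eq_zero, ← sub_mul]; exact h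
    rw [this]
  have main : ∀ q (m : Fin n →₀ ℕ), m j = q → MvPowerSeries.coeff m f = 0 := by
    intro q
    induction q using Nat.strong_induction_on with
    | _ q ih =>
      intro m hm
      have h1 : MvPowerSeries.coeff (Finsupp.single i 1 + m)
          ((X i : MvPowerSeries (Fin n) S) * f) = MvPowerSeries.coeff m f := by
        rw [MvPowerSeries.X, MvPowerSeries.coeff_add_monomial_mul, one_mul]
      have h2 : MvPowerSeries.coeff (Finsupp.single i 1 + m)
          ((X j : MvPowerSeries (Fin n) S) * f)
          = if Finsupp.single j 1 ≤ Finsupp.single i 1 + m then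
              MvPowerSeries.coeff (Finsupp.single i 1 + m - Finsupp.single j 1) f else 0 := by
        rw [MvPowerSeries.X, MvPowerSeries.coeff_monomial_mul, one_mul]
      rcases Nat.eq_zero_or_pos q with hq | hq
      · subst hq
        have hneg : ¬ Finsupp.single j 1 ≤ Finsupp.single i 1 + m := by
          intro hle
          have := hle j
          rw [Finsupp.single_apply, if_pos rfl] at this
          rw [Finsupp.add_apply, Finsupp.single_apply, if_neg hij, hm] at this
          omega
        rw [← h1, ← hXf, h2, if_neg hneg]
      · have hle : Finsupp.single j 1 ≤ Finsupp.single i 1 + m := by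
          intro s
          rw [Finsupp.single_apply]
          split
          · next h' =>
              subst h'
              rw [Finsupp.add_apply, Finsupp.single_apply, if_neg hij, hm]
              omega
          · exact Nat.zero_le _
        rw [← h1, ← hXf, h2, if_pos hle]
        refine ih (q - 1) (by omega) _ ?_
        rw [Finsupp.tsub_apply, Finsupp.add_apply, Finsupp.single_apply, if_neg hij,
          Finsupp.single_apply, if_pos rfl, hm]
        omega
  ext m
  rw [main (m j) m rfl, map_zero]

theorem swapVars_X {n : ℕ} (i j k : Fin n) :
    swapVars i j (X k : MvPowerSeries (Fin n) S) = X (Equiv.swap i j k) := by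
  classical
  ext m
  rw [swapVars_coeff, MvPowerSeries.coeff_X, MvPowerSeries.coeff_X]
  by_cases hm : m = Finsupp.single (Equiv.swap i j k) 1
  · subst hm
    rw [if_pos rfl, if_pos]
    rw [Finsupp.equivMapDomain_single, Equiv.swap_apply_self]
  · rw [if_neg hm, if_neg]
    intro hc
    apply hm
    have := congrArg (equivMapDomain (Equiv.swap i j)) hc
    rwa [equivMapDomain_swap_invol, Finsupp.equivMapDomain_single] at this

theorem swapVars_sub {n : ℕ} (i j : Fin n) (f h : MvPowerSeries (Fin n) S) :
    swapVars i j (f - h) = swapVars i j f - swapVars i j h := rfl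

theorem swapVars_invol {n : ℕ} (i j : Fin n) (f : MvPowerSeries (Fin n) S) :
    swapVars i j (swapVars i j f) = f := by
  ext m
  rw [swapVars_coeff, swapVars_coeff, equivMapDomain_swap_invol]


theorem msubstRingHom_apply {k n : ℕ} (a : Fin k → MvPowerSeries (Fin n) S)
    (ha : ∀ j, MvPowerSeries.constantCoeff (a j) = 0) (F : MvPowerSeries (Fin k) S) :
    msubstRingHom a ha F = msubst a F := rfl

end FGLaux

set_option maxHeartbeats 2000000 in
/-- the splitting identity
`r1 ⊗ r2 = (r1·r2) ⊗ 1 + ((r1·∂'_i(r2)) ⊗ 1)·ξ'` in `A = R ⊗_{R^{s_i}} R`, and in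
particular `1 ⊗ r − r ⊗ 1 = (∂'_i(r) ⊗ 1)·ξ'`. -/
theorem tensor_splitting_identity
    (F : MvPowerSeries (Fin 2) S) (hF : IsFormalGroupLaw F)
    (ι : MvPowerSeries (Fin 1) S) (hι : IsFormalInverse F ι)
    (g : MvPowerSeries (Fin 2) S)
    (hg : (X 0 : MvPowerSeries (Fin 2) S) - X 1 = fsub F ι (X 0) (X 1) * g)
    (hgu : IsUnit g)
    {n : ℕ} (i j : Fin n) (hij : (i : ℕ) + 1 = (j : ℕ))
    (Dem' : MvPowerSeries (Fin n) S → MvPowerSeries (Fin n) S)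
    (hDem' : ∀ f, fsub F ι (X j : MvPowerSeries (Fin n) S) (X i) * Dem' f
                    = swapVars i j f - f) :
    (∀ r1 r2 : MvPowerSeries (Fin n) S,
        (r1 ⊗ₜ[fixedSubalgebra S i j] r2 : BSB S i j)
          = (r1 * r2) ⊗ₜ[fixedSubalgebra S i j] (1 : MvPowerSeries (Fin n) S)
            + ((r1 * Dem' r2) ⊗ₜ[fixedSubalgebra S i j] (1 : MvPowerSeries (Fin n) S))
                * xiElt' g i j) ∧
    (∀ r : MvPowerSeries (Fin n) S,
        ((1 : MvPowerSeries (Fin n) S) ⊗ₜ[fixedSubalgebra S i j] r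
            - r ⊗ₜ[fixedSubalgebra S i j] (1 : MvPowerSeries (Fin n) S) : BSB S i j)
          = (Dem' r ⊗ₜ[fixedSubalgebra S i j] (1 : MvPowerSeries (Fin n) S))
              * xiElt' g i j) := by
  classical
  have hij' : i ≠ j := by
    intro h
    rw [h] at hij
    omega
  -- the substituted family (x_j, x_i) and its constant coefficients
  have hXji : ∀ t, MvPowerSeries.constantCoeff
      ((![X j, X i] : Fin 2 → MvPowerSeries (Fin n) S) t) = 0 := by
    intro t
    fin_cases t <;>
      simp [Matrix.cons_val_zero, Matrix.cons_val_one, Matrix.head_cons,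
        MvPowerSeries.constantCoeff_X]
  have e0 : msubst ![(X j : MvPowerSeries (Fin n) S), X i] (X 0) = X j := by
    rw [FGLaux.msubst_X hXji 0]
    simp
  have e1 : msubst ![(X j : MvPowerSeries (Fin n) S), X i] (X 1) = X i := by
    rw [FGLaux.msubst_X hXji 1]
    simp
  -- constant coefficients of the family (x, ι(y))
  have hι0 : MvPowerSeries.constantCoeff (fneg ι (X 1 : MvPowerSeries (Fin 2) S)) = 0 := by
    rw [fneg, FGLaux.constantCoeff_msubst]
    exact hι.1
  have hfam : ∀ t, MvPowerSeries.constantCoeff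
      ((![X 0, fneg ι (X 1)] : Fin 2 → MvPowerSeries (Fin 2) S) t) = 0 := by
    intro t
    fin_cases t
    · simp [MvPowerSeries.constantCoeff_X]
    · simpa using hι0
  have hX1fam : ∀ t, MvPowerSeries.constantCoeff
      ((![X 1] : Fin 1 → MvPowerSeries (Fin 2) S) t) = 0 := by
    intro t
    fin_cases t
    simp [MvPowerSeries.constantCoeff_X]
  -- substitution of (x_j, x_i) into `fsub F ι x y` gives `fsub F ι x_j x_i`
  have einner : (fun t => msubst ![(X j : MvPowerSeries (Fin n) S), X i]
      ((![X 1] : Fin 1 → MvPowerSeries (Fin 2) S) t))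
      = ![(X i : MvPowerSeries (Fin n) S)] := by
    funext t
    fin_cases t
    simpa using e1
  have eneg : msubst ![(X j : MvPowerSeries (Fin n) S), X i] (fneg ι (X 1)) = fneg ι (X i) := by
    rw [fneg, FGLaux.msubst_comp hX1fam hXji ι, einner, fneg]
  have efam : (fun t => msubst ![(X j : MvPowerSeries (Fin n) S), X i]
      ((![X 0, fneg ι (X 1)] : Fin 2 → MvPowerSeries (Fin 2) S) t))
      = ![(X j : MvPowerSeries (Fin n) S), fneg ι (X i)] := by
    funext t
    fin_cases t
    · simpa using e0
    · simpa using eneg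
  have eF : msubst ![(X j : MvPowerSeries (Fin n) S), X i] (fsub F ι (X 0) (X 1))
      = fsub F ι (X j) (X i) := by
    rw [fsub, FGLaux.msubst_comp hfam hXji F, efam, fsub]
  -- the key multiplicative identity x_j - x_i = w * u
  have hwu : (X j : MvPowerSeries (Fin n) S) - X i
      = fsub F ι (X j) (X i) * gsub g (X j) (X i) := by
    have happ := congrArg (FGLaux.msubstRingHom ![(X j : MvPowerSeries (Fin n) S), X i] hXji) hg
    rw [map_sub, map_mul] at happ
    rw [FGLaux.msubstRingHom_apply, FGLaux.msubstRingHom_apply, FGLaux.msubstRingHom_apply,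
      FGLaux.msubstRingHom_apply, e0, e1, eF] at happ
    exact happ
  -- u is a unit
  have hu_unit : IsUnit (gsub g (X j) (X i) : MvPowerSeries (Fin n) S) := by
    rw [MvPowerSeries.isUnit_iff_constantCoeff]
    rw [gsub, FGLaux.constantCoeff_msubst]
    exact MvPowerSeries.isUnit_iff_constantCoeff.mp hgu
  -- the second (particular) statement
  have key : ∀ r : MvPowerSeries (Fin n) S,
      ((1 : MvPowerSeries (Fin n) S) ⊗ₜ[fixedSubalgebra S i j] r
          - r ⊗ₜ[fixedSubalgebra S i j] (1 : MvPowerSeries (Fin n) S) : BSB S i j)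
        = (Dem' r ⊗ₜ[fixedSubalgebra S i j] (1 : MvPowerSeries (Fin n) S))
            * xiElt' g i j := by
    intro r
    set b : MvPowerSeries (Fin n) S := Dem' r * Ring.inverse (gsub g (X j) (X i)) with hbdef
    have hbX : b * ((X j : MvPowerSeries (Fin n) S) - X i) = swapVars i j r - r := by
      have h1 : b * ((X j : MvPowerSeries (Fin n) S) - X i)
          = (fsub F ι (X j) (X i) * Dem' r)
            * (Ring.inverse (gsub g (X j) (X i)) * gsub g (X j) (X i)) := by
        rw [hwu]; ring
      rw [Ring.inverse_mul_cancel _ hu_unit, mul_one, hDem'] at h1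
      exact h1
    have hsb : swapVars i j b = b := by
      have h3 : swapVars i j (b * ((X j : MvPowerSeries (Fin n) S) - X i))
          = swapVars i j b * ((X i : MvPowerSeries (Fin n) S) - X j) := by
        rw [swapVars_mul]
        congr 1
        rw [FGLaux.swapVars_sub, FGLaux.swapVars_X, FGLaux.swapVars_X,
          Equiv.swap_apply_right, Equiv.swap_apply_left]
      rw [hbX, FGLaux.swapVars_sub, FGLaux.swapVars_invol] at h3
      have h2 : ((X j : MvPowerSeries (Fin n) S) - X i) * (swapVars i j b - b) = 0 := by
        linear_combination h3 - hbX
      exact sub_eq_zero.mp (FGLaux.X_sub_X_regular hij' h2)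
    set a : MvPowerSeries (Fin n) S := r - X i * b with hadef
    have hsa : swapVars i j a = a := by
      rw [hadef, FGLaux.swapVars_sub, swapVars_mul, FGLaux.swapVars_X,
        Equiv.swap_apply_left, hsb]
      linear_combination -hbX
    have hamem : a ∈ fixedSubalgebra S i j := hsa
    have hbmem : b ∈ fixedSubalgebra S i j := hsb
    have shift : ∀ (c y z : MvPowerSeries (Fin n) S) (hc : c ∈ fixedSubalgebra S i j),
        (z ⊗ₜ[fixedSubalgebra S i j] (c * y) : BSB S i j)
          = (c * z) ⊗ₜ[fixedSubalgebra S i j] y := by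
      intro c y z hc
      have hc1 : (c ⊗ₜ[fixedSubalgebra S i j] (1 : MvPowerSeries (Fin n) S) : BSB S i j)
          = (1 : MvPowerSeries (Fin n) S) ⊗ₜ[fixedSubalgebra S i j] c := by
        have h1 := Algebra.TensorProduct.algebraMap_apply
          (R := fixedSubalgebra S i j) (S := fixedSubalgebra S i j)
          (A := MvPowerSeries (Fin n) S) (B := MvPowerSeries (Fin n) S)
          (⟨c, hc⟩ : fixedSubalgebra S i j)
        have h2 := Algebra.TensorProduct.algebraMap_apply'
          (R := fixedSubalgebra S i j)
          (A := MvPowerSeries (Fin n) S) (B := MvPowerSeries (Fin n) S)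
          (⟨c, hc⟩ : fixedSubalgebra S i j)
        rw [h1] at h2
        exact h2
      calc (z ⊗ₜ[fixedSubalgebra S i j] (c * y) : BSB S i j)
          = (z * 1) ⊗ₜ[fixedSubalgebra S i j] (y * c) := by
            rw [mul_one, mul_comm y c]
        _ = (z ⊗ₜ[fixedSubalgebra S i j] y)
              * ((1 : MvPowerSeries (Fin n) S) ⊗ₜ[fixedSubalgebra S i j] c) :=
            (Algebra.TensorProduct.tmul_mul_tmul _ _ _ _).symm
        _ = (z ⊗ₜ[fixedSubalgebra S i j] y)
              * (c ⊗ₜ[fixedSubalgebra S i j] (1 : MvPowerSeries (Fin n) S)) := by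
            rw [hc1]
        _ = (z * c) ⊗ₜ[fixedSubalgebra S i j] (y * 1) :=
            Algebra.TensorProduct.tmul_mul_tmul _ _ _ _
        _ = (c * z) ⊗ₜ[fixedSubalgebra S i j] y := by
            rw [mul_one, mul_comm z c]
    have hdec : r = a + X i * b := by rw [hadef]; ring
    have ea : (1 : MvPowerSeries (Fin n) S) ⊗ₜ[fixedSubalgebra S i j] a
        = (a ⊗ₜ[fixedSubalgebra S i j] (1 : MvPowerSeries (Fin n) S) : BSB S i j) := by
      have := shift a 1 1 hamem
      rwa [mul_one] at this
    have eb : (1 : MvPowerSeries (Fin n) S) ⊗ₜ[fixedSubalgebra S i j] (X i * b)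
        = (b ⊗ₜ[fixedSubalgebra S i j] (X i : MvPowerSeries (Fin n) S) : BSB S i j) := by
      have := shift b (X i) 1 hbmem
      rw [mul_one] at this
      rw [mul_comm]
      exact this
    calc ((1 : MvPowerSeries (Fin n) S) ⊗ₜ[fixedSubalgebra S i j] r
          - r ⊗ₜ[fixedSubalgebra S i j] (1 : MvPowerSeries (Fin n) S) : BSB S i j)
        = (1 : MvPowerSeries (Fin n) S) ⊗ₜ[fixedSubalgebra S i j] (a + X i * b)
            - (a + X i * b) ⊗ₜ[fixedSubalgebra S i j] (1 : MvPowerSeries (Fin n) S) := by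
          rw [← hdec]
      _ = b ⊗ₜ[fixedSubalgebra S i j] (X i : MvPowerSeries (Fin n) S)
            - (X i * b) ⊗ₜ[fixedSubalgebra S i j] (1 : MvPowerSeries (Fin n) S) := by
          rw [TensorProduct.tmul_add, TensorProduct.add_tmul, ea, eb]
          abel
      _ = (Dem' r ⊗ₜ[fixedSubalgebra S i j] (1 : MvPowerSeries (Fin n) S))
            * xiElt' g i j := by
          have m0 : ((Dem' r ⊗ₜ[fixedSubalgebra S i j] (1 : MvPowerSeries (Fin n) S)) : BSB S i j)
              * (Ring.inverse (gsub g (X j) (X i))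
                  ⊗ₜ[fixedSubalgebra S i j] (1 : MvPowerSeries (Fin n) S))
              = b ⊗ₜ[fixedSubalgebra S i j] (1 : MvPowerSeries (Fin n) S) := by
            calc _ = (Dem' r * Ring.inverse (gsub g (X j) (X i)))
                  ⊗ₜ[fixedSubalgebra S i j]
                    ((1 : MvPowerSeries (Fin n) S) * 1) :=
                Algebra.TensorProduct.tmul_mul_tmul _ _ _ _
              _ = _ := by rw [mul_one, ← hbdef]
          have m1 : ((b ⊗ₜ[fixedSubalgebra S i j] (1 : MvPowerSeries (Fin n) S)) : BSB S i j)
              * ((1 : MvPowerSeries (Fin n) S) ⊗ₜ[fixedSubalgebra S i j] (X i))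
              = b ⊗ₜ[fixedSubalgebra S i j] (X i : MvPowerSeries (Fin n) S) := by
            calc _ = (b * 1) ⊗ₜ[fixedSubalgebra S i j]
                    ((1 : MvPowerSeries (Fin n) S) * X i) :=
                Algebra.TensorProduct.tmul_mul_tmul _ _ _ _
              _ = _ := by rw [mul_one, one_mul]
          have m2 : ((b ⊗ₜ[fixedSubalgebra S i j] (1 : MvPowerSeries (Fin n) S)) : BSB S i j)
              * ((X i : MvPowerSeries (Fin n) S)
                  ⊗ₜ[fixedSubalgebra S i j] (1 : MvPowerSeries (Fin n) S))
              = (X i * b) ⊗ₜ[fixedSubalgebra S i j] (1 : MvPowerSeries (Fin n) S) := by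
            calc _ = (b * X i) ⊗ₜ[fixedSubalgebra S i j]
                    ((1 : MvPowerSeries (Fin n) S) * 1) :=
                Algebra.TensorProduct.tmul_mul_tmul _ _ _ _
              _ = _ := by rw [mul_one, mul_comm b (X i)]
          rw [xiElt']
          linear_combination ((X i : MvPowerSeries (Fin n) S)
              ⊗ₜ[fixedSubalgebra S i j] (1 : MvPowerSeries (Fin n) S)
            - (1 : MvPowerSeries (Fin n) S) ⊗ₜ[fixedSubalgebra S i j] (X i)) * m0 - m1 + m2
  refine ⟨fun r1 r2 => ?_, key⟩
  have n1 : ((r1 ⊗ₜ[fixedSubalgebra S i j] (1 : MvPowerSeries (Fin n) S)) : BSB S i j)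
      * ((1 : MvPowerSeries (Fin n) S) ⊗ₜ[fixedSubalgebra S i j] r2)
      = r1 ⊗ₜ[fixedSubalgebra S i j] r2 := by
    calc _ = (r1 * 1) ⊗ₜ[fixedSubalgebra S i j] ((1 : MvPowerSeries (Fin n) S) * r2) :=
        Algebra.TensorProduct.tmul_mul_tmul _ _ _ _
      _ = _ := by rw [mul_one, one_mul]
  have n2 : ((r1 ⊗ₜ[fixedSubalgebra S i j] (1 : MvPowerSeries (Fin n) S)) : BSB S i j)
      * (r2 ⊗ₜ[fixedSubalgebra S i j] (1 : MvPowerSeries (Fin n) S))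
      = (r1 * r2) ⊗ₜ[fixedSubalgebra S i j] (1 : MvPowerSeries (Fin n) S) := by
    calc _ = (r1 * r2) ⊗ₜ[fixedSubalgebra S i j] ((1 : MvPowerSeries (Fin n) S) * 1) :=
        Algebra.TensorProduct.tmul_mul_tmul _ _ _ _
      _ = _ := by rw [mul_one]
  have n3 : ((r1 ⊗ₜ[fixedSubalgebra S i j] (1 : MvPowerSeries (Fin n) S)) : BSB S i j)
      * (Dem' r2 ⊗ₜ[fixedSubalgebra S i j] (1 : MvPowerSeries (Fin n) S))
      = (r1 * Dem' r2) ⊗ₜ[fixedSubalgebra S i j] (1 : MvPowerSeries (Fin n) S) := by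
    calc _ = (r1 * Dem' r2) ⊗ₜ[fixedSubalgebra S i j] ((1 : MvPowerSeries (Fin n) S) * 1) :=
        Algebra.TensorProduct.tmul_mul_tmul _ _ _ _
      _ = _ := by rw [mul_one]
  have expand : ((r1 ⊗ₜ[fixedSubalgebra S i j] (1 : MvPowerSeries (Fin n) S) : BSB S i j))
      * ((1 : MvPowerSeries (Fin n) S) ⊗ₜ[fixedSubalgebra S i j] r2
          - r2 ⊗ₜ[fixedSubalgebra S i j] (1 : MvPowerSeries (Fin n) S))
      = r1 ⊗ₜ[fixedSubalgebra S i j] r2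
        - (r1 * r2) ⊗ₜ[fixedSubalgebra S i j] (1 : MvPowerSeries (Fin n) S) := by
    linear_combination n1 - n2
  linear_combination -expand
    + (r1 ⊗ₜ[fixedSubalgebra S i j] (1 : MvPowerSeries (Fin n) S) : BSB S i j) * key r2
    + xiElt' g i j * n3


end
end

section
/- Let S be a commutative ring, F a formal group law over S, n ≥ 3, and 1 ≤ i ≤ n−2. Then in R = S[[x_1,…,x_n]] one has ∂'_i(x_{i+1} −_F x_{i+2}) = −g(x_i, x_{i+1})^{-1} · g(x_{i+1}, x_i) · g(x_i −_F x_{i+2}, x_{i+1} −_F x_{i+2}); in particular ∂'_i(x_{i+1} −_F x_{i+2}) is an invertible element of R. -/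
/- Common setup: substitution of multivariate power series, formal group laws,
formal inverses, and the variable–swapping operation. -/

open MvPowerSeries Finsupp

noncomputable section

variable {S : Type*} [CommRing S]

/- ═══════════════ Auxiliary infrastructure ═══════════════ -/

section Aux

variable {S : Type*} [CommRing S]

open Finset

namespace FGL

/-- `m.sum fun _ e => e` as a sum over all of `Fin n`. -/
lemma degsum {n : ℕ} (m : Fin n →₀ ℕ) : (m.sum fun _ e => e) = ∑ t, m t :=
  Finsupp.sum_fintype _ _ fun _ => rfl

lemma mem_IicD_iff {k : ℕ} (d : Fin k →₀ ℕ) (N : ℕ) :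
    d ∈ Finset.Iic (Finsupp.equivFunOnFinite.symm fun _ : Fin k => N) ↔ ∀ t, d t ≤ N := by
  simp [Finset.mem_Iic, Finsupp.le_def]

lemma sum_apply_le {k : ℕ} (d : Fin k →₀ ℕ) (t : Fin k) : d t ≤ ∑ s, d s :=
  Finset.single_le_sum (fun _ _ => Nat.zero_le _) (Finset.mem_univ t)

lemma coeff_pow_eq_zero {n : ℕ} {a : MvPowerSeries (Fin n) S}
    (ha : MvPowerSeries.constantCoeff a = 0)
    {m : Fin n →₀ ℕ} {p : ℕ} (h : (∑ t, m t) < p) :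
    MvPowerSeries.coeff m (a ^ p) = 0 := by
  classical
  induction p generalizing m with
  | zero => omega
  | succ p ih =>
    rw [pow_succ', MvPowerSeries.coeff_mul]
    apply Finset.sum_eq_zero
    rintro ⟨u, v⟩ huv
    dsimp only
    rw [Finset.HasAntidiagonal.mem_antidiagonal] at huv
    by_cases hu : u = 0
    · subst hu
      rw [show MvPowerSeries.coeff 0 a = MvPowerSeries.constantCoeff a from rfl, ha,
        zero_mul]
    · have h1 : 1 ≤ ∑ t, u t := by
        by_contra hc
        push_neg at hc
        exact hu (Finsupp.ext fun t => by
          have := sum_apply_le u t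
          simp only [Finsupp.coe_zero, Pi.zero_apply]
          omega)
      have hsum : (∑ t, u t) + (∑ t, v t) = ∑ t, m t := by
        rw [← Finset.sum_add_distrib]
        exact Finset.sum_congr rfl fun t _ => by
          rw [← huv]; rfl
      rw [ih (by omega), mul_zero]

lemma coeff_prod_pow_eq_zero {k n : ℕ} {a : Fin k → MvPowerSeries (Fin n) S}
    (ha : ∀ t, MvPowerSeries.constantCoeff (a t) = 0)
    {d : Fin k → ℕ} {m : Fin n →₀ ℕ} {s : Finset (Fin k)}
    (h : (∑ t, m t) < ∑ t ∈ s, d t) :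
    MvPowerSeries.coeff m (∏ j ∈ s, a j ^ d j) = 0 := by
  classical
  induction s using Finset.induction generalizing m with
  | empty => simp at h
  | insert i s hns ih =>
    rw [Finset.prod_insert hns, MvPowerSeries.coeff_mul]
    apply Finset.sum_eq_zero
    rintro ⟨u, v⟩ huv
    dsimp only
    rw [Finset.HasAntidiagonal.mem_antidiagonal] at huv
    rw [Finset.sum_insert hns] at h
    have hsum : (∑ t, u t) + (∑ t, v t) = ∑ t, m t := by
      rw [← Finset.sum_add_distrib]
      exact Finset.sum_congr rfl fun t _ => by rw [← huv]; rfl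
    by_cases hu : (∑ t, u t) < d i
    · rw [coeff_pow_eq_zero (ha i) hu, zero_mul]
    · rw [ih (by omega), mul_zero]

lemma coeff_msubst {k n : ℕ} {a : Fin k → MvPowerSeries (Fin n) S}
    (ha : ∀ t, MvPowerSeries.constantCoeff (a t) = 0)
    (F : MvPowerSeries (Fin k) S) (m : Fin n →₀ ℕ) {T : Finset (Fin k →₀ ℕ)}
    (hT : Finset.Iic (Finsupp.equivFunOnFinite.symm fun _ : Fin k => m.sum fun _ e => e) ⊆ T) :
    MvPowerSeries.coeff m (msubst a F)
      = ∑ d ∈ T, MvPowerSeries.coeff d F * MvPowerSeries.coeff m (∏ j, a j ^ d j) := by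
  classical
  have hdef : MvPowerSeries.coeff m (msubst a F)
      = ∑ d ∈ Finset.Iic (Finsupp.equivFunOnFinite.symm fun _ : Fin k => m.sum fun _ e => e),
          MvPowerSeries.coeff d F * MvPowerSeries.coeff m (∏ j, a j ^ d j) := rfl
  rw [hdef]
  apply Finset.sum_subset hT
  intro d _ hnot
  rw [mem_IicD_iff] at hnot
  push_neg at hnot
  obtain ⟨t, ht⟩ := hnot
  rw [coeff_prod_pow_eq_zero ha, mul_zero]
  have h1 := sum_apply_le d t
  rw [degsum] at ht
  omega

lemma constantCoeff_msubst {k n : ℕ} (a : Fin k → MvPowerSeries (Fin n) S)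
    (F : MvPowerSeries (Fin k) S) :
    MvPowerSeries.constantCoeff (msubst a F)
      = MvPowerSeries.constantCoeff F := by
  classical
  have hdef : MvPowerSeries.constantCoeff (msubst a F)
      = ∑ d ∈ Finset.Iic (Finsupp.equivFunOnFinite.symm
            fun _ : Fin k => (0 : Fin n →₀ ℕ).sum fun _ e => e),
          MvPowerSeries.coeff d F * MvPowerSeries.coeff 0 (∏ j, a j ^ d j) := rfl
  rw [hdef, Finset.sum_eq_single 0]
  · simp
  · intro d hd hd0
    exfalso
    rw [mem_IicD_iff] at hd
    exact hd0 (Finsupp.ext fun t => by have := hd t; simp at this ⊢; omega)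
  · intro h0
    exfalso
    exact h0 (by rw [mem_IicD_iff]; intro t; simp)

lemma msubst_add {k n : ℕ} (a : Fin k → MvPowerSeries (Fin n) S)
    (F G : MvPowerSeries (Fin k) S) :
    msubst a (F + G) = msubst a F + msubst a G := by
  apply MvPowerSeries.ext; intro m
  show _ = MvPowerSeries.coeff m (msubst a F) + MvPowerSeries.coeff m (msubst a G)
  simp only [msubst, MvPowerSeries.coeff_apply, ← Finset.sum_add_distrib]
  exact Finset.sum_congr rfl fun d _ => by
    rw [show (F + G) d = F d + G d from rfl, add_mul]

lemma msubst_zero {k n : ℕ} (a : Fin k → MvPowerSeries (Fin n) S) :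
    msubst a (0 : MvPowerSeries (Fin k) S) = 0 := by
  apply MvPowerSeries.ext; intro m
  show _ = (0 : S)
  simp only [msubst, MvPowerSeries.coeff_apply]
  apply Finset.sum_eq_zero
  intro d _
  rw [show (0 : MvPowerSeries (Fin k) S) d = 0 from rfl, zero_mul]

lemma msubst_sub {k n : ℕ} (a : Fin k → MvPowerSeries (Fin n) S)
    (F G : MvPowerSeries (Fin k) S) :
    msubst a (F - G) = msubst a F - msubst a G := by
  have h := msubst_add a (F - G) G
  rw [sub_add_cancel] at h
  rw [h]; ring

lemma msubst_one {k n : ℕ} (a : Fin k → MvPowerSeries (Fin n) S) :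
    msubst a (1 : MvPowerSeries (Fin k) S) = 1 := by
  classical
  apply MvPowerSeries.ext; intro m
  show _ = MvPowerSeries.coeff m 1
  simp only [msubst, MvPowerSeries.coeff_apply]
  rw [Finset.sum_eq_single 0]
  · have hprod : (∏ j : Fin k, a j ^ (0 : Fin k →₀ ℕ) j) = 1 := by
      apply Finset.prod_eq_one
      intro j _
      rw [show (0 : Fin k →₀ ℕ) j = 0 from rfl, pow_zero]
    have h10 : (1 : MvPowerSeries (Fin k) S) 0 = 1 := by
      show MvPowerSeries.coeff 0 (1 : MvPowerSeries (Fin k) S) = 1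
      simp
    rw [hprod, h10, one_mul]
  · intro d _ hd0
    have h1d : (1 : MvPowerSeries (Fin k) S) d = 0 := by
      show MvPowerSeries.coeff d (1 : MvPowerSeries (Fin k) S) = 0
      classical
      rw [MvPowerSeries.coeff_one]
      simp [hd0]
    rw [h1d, zero_mul]
  · intro h0
    exfalso
    exact h0 (by rw [mem_IicD_iff]; intro t; simp)
lemma msubst_X {k n : ℕ} {a : Fin k → MvPowerSeries (Fin n) S} (t : Fin k)
    (ha : MvPowerSeries.constantCoeff (a t) = 0) :
    msubst a (MvPowerSeries.X t) = a t := by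
  classical
  apply MvPowerSeries.ext; intro m
  have hdef : MvPowerSeries.coeff m (msubst a (MvPowerSeries.X t))
      = ∑ d ∈ Finset.Iic (Finsupp.equivFunOnFinite.symm fun _ : Fin k => m.sum fun _ e => e),
          MvPowerSeries.coeff d (MvPowerSeries.X t)
            * MvPowerSeries.coeff m (∏ j, a j ^ d j) := rfl
  rw [hdef]
  have e1 : ∀ d ∈ Finset.Iic (Finsupp.equivFunOnFinite.symm fun _ : Fin k => m.sum fun _ e => e),
      MvPowerSeries.coeff d (MvPowerSeries.X t) * MvPowerSeries.coeff m (∏ j, a j ^ d j)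
      = if d = Finsupp.single t 1 then MvPowerSeries.coeff m (∏ j, a j ^ d j) else 0 := by
    intro d _
    rw [MvPowerSeries.coeff_X]
    split_ifs with h
    · rw [one_mul]
    · rw [zero_mul]
  rw [Finset.sum_congr rfl e1, Finset.sum_ite_eq']
  have hprod : (∏ j, a j ^ (Finsupp.single t 1) j) = a t := by
    rw [Finset.prod_eq_single t]
    · rw [Finsupp.single_eq_same, pow_one]
    · intro j _ hj
      rw [Finsupp.single_eq_of_ne hj, pow_zero]
    · intro h; exact absurd (Finset.mem_univ t) h
  split_ifs with hmem
  · rw [hprod]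
  · -- single t 1 ∉ Iic D(m) forces deg m = 0 hence m = 0
    rw [mem_IicD_iff] at hmem
    push_neg at hmem
    obtain ⟨s, hs⟩ := hmem
    have hs' : (Finsupp.single t 1) s ≤ 1 := by
      rcases eq_or_ne s t with h | h
      · rw [h, Finsupp.single_eq_same]
      · rw [Finsupp.single_eq_of_ne h]; omega
    have hm0 : m = 0 := by
      apply Finsupp.ext
      intro u
      have h1 := sum_apply_le m u
      have h2 := degsum m
      simp only [Finsupp.coe_zero, Pi.zero_apply]
      omega
    rw [hm0]
    rw [show MvPowerSeries.coeff 0 (a t) = MvPowerSeries.constantCoeff (a t) from rfl,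
      ha]

lemma msubst_mul {k n : ℕ} {a : Fin k → MvPowerSeries (Fin n) S}
    (ha : ∀ t, MvPowerSeries.constantCoeff (a t) = 0)
    (F G : MvPowerSeries (Fin k) S) :
    msubst a (F * G) = msubst a F * msubst a G := by
  classical
  apply MvPowerSeries.ext; intro m
  set N : ℕ := m.sum fun _ e => e with hN
  have hNsum : ∑ t, m t = N := by rw [hN, degsum]
  set T2 : Finset (Fin k →₀ ℕ) :=
    Finset.Iic (Finsupp.equivFunOnFinite.symm fun _ : Fin k => 2 * N) with hT2
  have hmem2 : ∀ d : Fin k →₀ ℕ, d ∈ T2 ↔ ∀ t, d t ≤ 2 * N := fun d => mem_IicD_iff d _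
  have hsub : Finset.Iic (Finsupp.equivFunOnFinite.symm fun _ : Fin k => m.sum fun _ e => e)
      ⊆ T2 := by
    intro d hd
    rw [mem_IicD_iff] at hd
    rw [hmem2]
    intro t; have h1 := hd t; rw [← hN] at h1; omega
  have hvanish : ∀ d : Fin k →₀ ℕ, ¬ (∀ t, d t ≤ N) →
      MvPowerSeries.coeff m (∏ j, a j ^ d j) = 0 := by
    intro d hd
    push_neg at hd
    obtain ⟨t, ht⟩ := hd
    apply coeff_prod_pow_eq_zero ha
    have h1 := sum_apply_le d t
    omega
  have hL : MvPowerSeries.coeff m (msubst a (F * G))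
      = ∑ p ∈ T2 ×ˢ T2, MvPowerSeries.coeff p.1 F * MvPowerSeries.coeff p.2 G
          * MvPowerSeries.coeff m (∏ j, a j ^ (p.1 + p.2) j) := by
    rw [coeff_msubst ha (F * G) m hsub]
    have e1 : ∀ d ∈ T2, MvPowerSeries.coeff d (F * G)
          * MvPowerSeries.coeff m (∏ j, a j ^ d j)
        = ∑ uv ∈ Finset.HasAntidiagonal.antidiagonal d, MvPowerSeries.coeff uv.1 F
            * MvPowerSeries.coeff uv.2 G
            * MvPowerSeries.coeff m (∏ j, a j ^ (uv.1 + uv.2) j) := by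
      intro d _
      rw [MvPowerSeries.coeff_mul, Finset.sum_mul]
      apply Finset.sum_congr rfl
      intro uv huv
      rw [Finset.HasAntidiagonal.mem_antidiagonal] at huv
      rw [huv]
    rw [Finset.sum_congr rfl e1, Finset.sum_sigma']
    have e2 : (∑ x ∈ T2.sigma fun d => Finset.HasAntidiagonal.antidiagonal d,
          MvPowerSeries.coeff x.2.1 F * MvPowerSeries.coeff x.2.2 G
            * MvPowerSeries.coeff m (∏ j, a j ^ (x.2.1 + x.2.2) j))
        = ∑ p ∈ (T2 ×ˢ T2).filter (fun p => p.1 + p.2 ∈ T2),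
            MvPowerSeries.coeff p.1 F * MvPowerSeries.coeff p.2 G
              * MvPowerSeries.coeff m (∏ j, a j ^ (p.1 + p.2) j) := by
      apply Finset.sum_nbij' (i := fun x => x.2) (j := fun p => ⟨p.1 + p.2, p⟩)
      · rintro ⟨d, u, v⟩ hx
        rw [Finset.mem_sigma] at hx
        obtain ⟨hd, huv⟩ := hx
        rw [Finset.HasAntidiagonal.mem_antidiagonal] at huv
        dsimp only at huv ⊢
        subst huv
        rw [Finset.mem_filter, Finset.mem_product]
        refine ⟨⟨?_, ?_⟩, hd⟩
        · rw [hmem2] at hd ⊢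
          intro t
          have h1 := hd t
          rw [Finsupp.add_apply] at h1
          show u t ≤ 2 * N
          omega
        · rw [hmem2] at hd ⊢
          intro t
          have h1 := hd t
          rw [Finsupp.add_apply] at h1
          show v t ≤ 2 * N
          omega
      · rintro p hp
        rw [Finset.mem_filter] at hp
        rw [Finset.mem_sigma]
        exact ⟨hp.2, by rw [Finset.HasAntidiagonal.mem_antidiagonal]⟩
      · rintro ⟨d, u, v⟩ hx
        rw [Finset.mem_sigma] at hx
        have huv := hx.2
        rw [Finset.HasAntidiagonal.mem_antidiagonal] at huv
        dsimp only at huv ⊢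
        subst huv
        rfl
      · intro p _; rfl
      · intro x _; rfl
    rw [e2]
    apply Finset.sum_subset (Finset.filter_subset _ _)
    intro p hp hnp
    have h2 : ¬ (p.1 + p.2 ∈ T2) := fun hmem => hnp (Finset.mem_filter.mpr ⟨hp, hmem⟩)
    rw [hmem2] at h2
    push_neg at h2
    obtain ⟨t, ht⟩ := h2
    rw [hvanish (p.1 + p.2) (by intro hall; have := hall t; omega), mul_zero]
  have hprod2 : ∀ u v : Fin k →₀ ℕ,
      (∏ j, a j ^ u j) * (∏ j, a j ^ v j) = ∏ j, a j ^ (u + v) j := by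
    intro u v
    rw [← Finset.prod_mul_distrib]
    apply Finset.prod_congr rfl
    intro j _
    rw [Finsupp.add_apply, pow_add]
  have hR : MvPowerSeries.coeff m (msubst a F * msubst a G)
      = ∑ p ∈ T2 ×ˢ T2, MvPowerSeries.coeff p.1 F * MvPowerSeries.coeff p.2 G
          * MvPowerSeries.coeff m (∏ j, a j ^ (p.1 + p.2) j) := by
    rw [MvPowerSeries.coeff_mul]
    have e1 : ∀ uv ∈ Finset.HasAntidiagonal.antidiagonal m,
        MvPowerSeries.coeff uv.1 (msubst a F) * MvPowerSeries.coeff uv.2 (msubst a G)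
        = ∑ u ∈ T2, ∑ v ∈ T2, (MvPowerSeries.coeff u F * MvPowerSeries.coeff v G) *
            (MvPowerSeries.coeff uv.1 (∏ j, a j ^ u j)
              * MvPowerSeries.coeff uv.2 (∏ j, a j ^ v j)) := by
      intro uv huv
      rw [Finset.HasAntidiagonal.mem_antidiagonal] at huv
      have hle1 : ∀ (w : Fin n →₀ ℕ), w + uv.2 = m ∨ uv.1 + w = m →
          Finset.Iic (Finsupp.equivFunOnFinite.symm fun _ : Fin k => w.sum fun _ e => e)
            ⊆ T2 := by
        intro w hw
        have hwle : ∀ t, w t ≤ m t := by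
          intro t
          rcases hw with hw | hw
          · have : w t + uv.2 t = m t := by rw [← hw]; rfl
            omega
          · have : uv.1 t + w t = m t := by rw [← hw]; rfl
            omega
        have hdegw : (w.sum fun _ e => e) ≤ N := by
          rw [degsum, ← hNsum]
          exact Finset.sum_le_sum fun t _ => hwle t
        intro d hd
        rw [mem_IicD_iff] at hd
        rw [hmem2]
        intro t
        have := hd t
        omega
      rw [coeff_msubst ha F uv.1 (hle1 uv.1 (Or.inl huv)),
        coeff_msubst ha G uv.2 (hle1 uv.2 (Or.inr huv)), Finset.sum_mul_sum]
      apply Finset.sum_congr rfl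
      intro u _
      apply Finset.sum_congr rfl
      intro v _
      ring
    rw [Finset.sum_congr rfl e1, Finset.sum_comm]
    rw [Finset.sum_product]
    apply Finset.sum_congr rfl
    intro u _
    rw [Finset.sum_comm]
    apply Finset.sum_congr rfl
    intro v _
    rw [← Finset.mul_sum, ← MvPowerSeries.coeff_mul, hprod2]
  rw [hL] at *
  exact hR.symm ▸ rfl
/-- `msubst` as a ring homomorphism. -/
noncomputable def msubstHom {k n : ℕ} (a : Fin k → MvPowerSeries (Fin n) S)
    (ha : ∀ t, MvPowerSeries.constantCoeff (a t) = 0) :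
    MvPowerSeries (Fin k) S →+* MvPowerSeries (Fin n) S where
  toFun := msubst a
  map_one' := msubst_one a
  map_mul' := msubst_mul ha
  map_zero' := msubst_zero a
  map_add' := msubst_add a

lemma msubst_prod_pow {k l n : ℕ} {a : Fin k → MvPowerSeries (Fin l) S}
    {b : Fin l → MvPowerSeries (Fin n) S}
    (hb : ∀ t, MvPowerSeries.constantCoeff (b t) = 0) (e : Fin k →₀ ℕ) :
    msubst b (∏ t, a t ^ e t) = ∏ t, (msubst b (a t)) ^ e t := by
  have := map_prod (msubstHom b hb) (fun t => a t ^ e t) Finset.univ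
  simp only [msubstHom, RingHom.coe_mk, MonoidHom.coe_mk, OneHom.coe_mk, map_pow] at this
  exact this

lemma msubst_comp {k l n : ℕ} {a : Fin k → MvPowerSeries (Fin l) S}
    {b : Fin l → MvPowerSeries (Fin n) S}
    (ha : ∀ t, MvPowerSeries.constantCoeff (a t) = 0)
    (hb : ∀ t, MvPowerSeries.constantCoeff (b t) = 0)
    (F : MvPowerSeries (Fin k) S) :
    msubst b (msubst a F) = msubst (fun t => msubst b (a t)) F := by
  classical
  apply MvPowerSeries.ext; intro m
  set N : ℕ := m.sum fun _ e => e with hN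
  set K : ℕ := N + l * N with hK
  set E : Finset (Fin k →₀ ℕ) :=
    Finset.Iic (Finsupp.equivFunOnFinite.symm fun _ : Fin k => K) with hE
  have hmemE : ∀ d : Fin k →₀ ℕ, d ∈ E ↔ ∀ t, d t ≤ K := fun d => mem_IicD_iff d K
  have hdef : MvPowerSeries.coeff m (msubst b (msubst a F))
      = ∑ d ∈ Finset.Iic (Finsupp.equivFunOnFinite.symm fun _ : Fin l => m.sum fun _ e => e),
          MvPowerSeries.coeff d (msubst a F)
            * MvPowerSeries.coeff m (∏ j, b j ^ d j) := rfl
  rw [hdef]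
  have e1 : ∀ d ∈ Finset.Iic (Finsupp.equivFunOnFinite.symm fun _ : Fin l => m.sum fun _ e => e),
      MvPowerSeries.coeff d (msubst a F) * MvPowerSeries.coeff m (∏ j, b j ^ d j)
      = ∑ e ∈ E, MvPowerSeries.coeff e F *
          (MvPowerSeries.coeff d (∏ j, a j ^ e j) * MvPowerSeries.coeff m (∏ j, b j ^ d j)) := by
    intro d hd
    rw [mem_IicD_iff] at hd
    have hsubd : Finset.Iic (Finsupp.equivFunOnFinite.symm fun _ : Fin k => d.sum fun _ e => e)
        ⊆ E := by
      intro x hx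
      rw [mem_IicD_iff] at hx
      rw [hmemE]
      intro t
      have h1 := hx t
      have h2 : (d.sum fun _ e => e) ≤ l * N := by
        rw [degsum]
        calc (∑ s, d s) ≤ ∑ _s : Fin l, N := Finset.sum_le_sum fun s _ => by
              have := hd s; rw [← hN] at this; exact this
          _ = l * N := by rw [Finset.sum_const, Finset.card_univ, Fintype.card_fin, smul_eq_mul]
      omega
    rw [coeff_msubst ha F d hsubd, Finset.sum_mul]
    apply Finset.sum_congr rfl
    intro e _
    ring
  rw [Finset.sum_congr rfl e1, Finset.sum_comm]
  have ha' : ∀ t, MvPowerSeries.constantCoeff (msubst b (a t)) = 0 := by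
    intro t; rw [constantCoeff_msubst]; exact ha t
  have hsubm : Finset.Iic (Finsupp.equivFunOnFinite.symm fun _ : Fin k => m.sum fun _ e => e)
      ⊆ E := by
    intro x hx
    rw [mem_IicD_iff] at hx
    rw [hmemE]
    intro t
    have := hx t
    rw [← hN] at this
    omega
  rw [coeff_msubst ha' F m hsubm]
  apply Finset.sum_congr rfl
  intro e _
  rw [← Finset.mul_sum]
  congr 1
  have hinner : (∑ d ∈ Finset.Iic (Finsupp.equivFunOnFinite.symm
        fun _ : Fin l => m.sum fun _ e => e),
      MvPowerSeries.coeff d (∏ j, a j ^ e j) * MvPowerSeries.coeff m (∏ j, b j ^ d j))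
      = MvPowerSeries.coeff m (msubst b (∏ j, a j ^ e j)) := rfl
  rw [hinner, msubst_prod_pow hb]
lemma prod_monomial_one {k n : ℕ} (w : Fin k → (Fin n →₀ ℕ)) (s : Finset (Fin k)) :
    (∏ t ∈ s, MvPowerSeries.monomial (w t) (1 : S))
      = MvPowerSeries.monomial (∑ t ∈ s, w t) 1 := by
  classical
  induction s using Finset.induction with
  | empty => simp [MvPowerSeries.monomial_zero_one]
  | insert x s hns ih =>
    rw [Finset.prod_insert hns, Finset.sum_insert hns, ih,
      MvPowerSeries.monomial_mul_monomial, one_mul]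

lemma swapVars_eq_msubst {n : ℕ} (i j : Fin n) (f : MvPowerSeries (Fin n) S) :
    swapVars i j f = msubst (fun t => MvPowerSeries.X (Equiv.swap i j t)) f := by
  classical
  apply MvPowerSeries.ext; intro m
  set σ := Equiv.swap i j with hσ
  have hlhs : MvPowerSeries.coeff m (swapVars i j f)
      = MvPowerSeries.coeff (Finsupp.equivMapDomain σ m) f := rfl
  have hdef : MvPowerSeries.coeff m (msubst (fun t => MvPowerSeries.X (σ t)) f)
      = ∑ d ∈ Finset.Iic (Finsupp.equivFunOnFinite.symm fun _ : Fin n => m.sum fun _ e => e),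
          MvPowerSeries.coeff d f
            * MvPowerSeries.coeff m (∏ t, (MvPowerSeries.X (σ t) : MvPowerSeries (Fin n) S) ^ d t) := rfl
  have hW : ∀ d : Fin n →₀ ℕ,
      (∏ t, (MvPowerSeries.X (σ t) : MvPowerSeries (Fin n) S) ^ d t)
        = MvPowerSeries.monomial (Finsupp.equivMapDomain σ d) 1 := by
    intro d
    have h1 : ∀ t, (MvPowerSeries.X (σ t) : MvPowerSeries (Fin n) S) ^ d t
        = MvPowerSeries.monomial (Finsupp.single (σ t) (d t)) 1 := fun t =>
      MvPowerSeries.X_pow_eq (σ t) (d t)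
    rw [Finset.prod_congr rfl (fun t _ => h1 t), prod_monomial_one]
    congr 1
    have h2 : (∑ t, Finsupp.single (σ t) (d t))
        = ∑ u, Finsupp.single u (d (σ.symm u)) := by
      apply Fintype.sum_equiv σ
      intro t
      rw [Equiv.symm_apply_apply]
    rw [h2]
    have h3 : ∀ u, Finsupp.single u (d (σ.symm u))
        = Finsupp.single u ((Finsupp.equivMapDomain σ d) u) := by
      intro u
      rw [Finsupp.equivMapDomain_apply]
    rw [Finset.sum_congr rfl (fun u _ => h3 u), Finsupp.univ_sum_single]
  rw [hlhs, hdef]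
  rw [Finset.sum_eq_single (Finsupp.equivMapDomain σ m)]
  · rw [hW, MvPowerSeries.coeff_monomial, if_pos, mul_one]
    apply Finsupp.ext
    intro s
    rw [Finsupp.equivMapDomain_apply]
    have : σ.symm (σ.symm s) = s := by
      rw [hσ, Equiv.symm_swap, Equiv.swap_apply_self]
    rw [Finsupp.equivMapDomain_apply, this]
  · intro d _ hd
    rw [hW, MvPowerSeries.coeff_monomial, if_neg, mul_zero]
    intro hm
    apply hd
    rw [hm]
    apply Finsupp.ext
    intro s
    rw [Finsupp.equivMapDomain_apply, Finsupp.equivMapDomain_apply]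
    have hs : σ.symm (σ.symm s) = s := by
      rw [hσ, Equiv.symm_swap, Equiv.swap_apply_self]
    rw [hs]
  · intro hnot
    exfalso
    apply hnot
    rw [mem_IicD_iff]
    intro t
    rw [Finsupp.equivMapDomain_apply, degsum]
    exact sum_apply_le m (σ.symm t)

lemma swapVars_msubst {k n : ℕ} (i j : Fin n) {a : Fin k → MvPowerSeries (Fin n) S}
    (ha : ∀ t, MvPowerSeries.constantCoeff (a t) = 0)
    (F : MvPowerSeries (Fin k) S) :
    swapVars i j (msubst a F) = msubst (fun t => swapVars i j (a t)) F := by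
  have hfun : (fun t => msubst (fun t' => (MvPowerSeries.X (Equiv.swap i j t') :
      MvPowerSeries (Fin n) S)) (a t)) = fun t => swapVars i j (a t) :=
    funext fun t => (swapVars_eq_msubst i j (a t)).symm
  rw [swapVars_eq_msubst, msubst_comp ha (fun t => MvPowerSeries.constantCoeff_X _) F, hfun]

lemma swapVars_X {n : ℕ} (i j s : Fin n) :
    swapVars i j (MvPowerSeries.X s : MvPowerSeries (Fin n) S)
      = MvPowerSeries.X (Equiv.swap i j s) := by
  rw [swapVars_eq_msubst,
    msubst_X (a := fun t => (MvPowerSeries.X (Equiv.swap i j t) : MvPowerSeries (Fin n) S)) s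
      (MvPowerSeries.constantCoeff_X _)]

lemma coeff_X_mul_add {n : ℕ} (t : Fin n) (u : Fin n →₀ ℕ) (h : MvPowerSeries (Fin n) S) :
    MvPowerSeries.coeff (u + Finsupp.single t 1) (MvPowerSeries.X t * h)
      = MvPowerSeries.coeff u h := by
  classical
  rw [MvPowerSeries.coeff_mul, Finset.sum_eq_single (Finsupp.single t 1, u)]
  · rw [MvPowerSeries.coeff_X, if_pos rfl, one_mul]
  · rintro ⟨p, q⟩ hpq hne
    rw [Finset.HasAntidiagonal.mem_antidiagonal] at hpq
    rw [MvPowerSeries.coeff_X]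
    split_ifs with hp
    · exfalso
      apply hne
      subst hp
      have : q = u := by
        have : Finsupp.single t 1 + q = Finsupp.single t 1 + u := by
          rw [hpq, add_comm]
        exact add_left_cancel this
      rw [this]
    · rw [zero_mul]
  · intro hnot
    exfalso
    apply hnot
    rw [Finset.HasAntidiagonal.mem_antidiagonal, add_comm]

lemma coeff_X_mul_zero {n : ℕ} (t : Fin n) (u : Fin n →₀ ℕ) (hu : u t = 0)
    (h : MvPowerSeries (Fin n) S) :
    MvPowerSeries.coeff u (MvPowerSeries.X t * h) = 0 := by
  classical
  rw [MvPowerSeries.coeff_mul]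
  apply Finset.sum_eq_zero
  rintro ⟨p, q⟩ hpq
  dsimp only
  rw [Finset.HasAntidiagonal.mem_antidiagonal] at hpq
  rw [MvPowerSeries.coeff_X]
  split_ifs with hp
  · exfalso
    have h1 : p t + q t = u t := by
      rw [← hpq]; rfl
    rw [hp, Finsupp.single_eq_same] at h1
    omega
  · rw [zero_mul]

lemma X_sub_X_regular {n : ℕ} {i j : Fin n} (hij : i ≠ j)
    {f : MvPowerSeries (Fin n) S}
    (h : (MvPowerSeries.X j - MvPowerSeries.X i) * f = 0) : f = 0 := by
  classical
  have key : ∀ m : Fin n →₀ ℕ,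
      MvPowerSeries.coeff m f
        = MvPowerSeries.coeff (m + Finsupp.single j 1) (MvPowerSeries.X i * f) := by
    intro m
    have h0 : MvPowerSeries.coeff (m + Finsupp.single j 1)
        ((MvPowerSeries.X j - MvPowerSeries.X i) * f) = 0 := by rw [h, map_zero]
    rw [sub_mul, map_sub, coeff_X_mul_add] at h0
    exact (sub_eq_zero.mp h0)
  have hji : (Finsupp.single j 1) i = 0 :=
    Finsupp.single_eq_of_ne (fun hh => hij hh)
  have main : ∀ p : ℕ, ∀ m : Fin n →₀ ℕ, m i = p → MvPowerSeries.coeff m f = 0 := by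
    intro p
    induction p with
    | zero =>
      intro m hm
      rw [key m]
      apply coeff_X_mul_zero
      rw [Finsupp.add_apply, hji, hm]
    | succ p ih =>
      intro m hm
      have hm' : m + Finsupp.single j 1
          = (m - Finsupp.single i 1 + Finsupp.single j 1) + Finsupp.single i 1 := by
        apply Finsupp.ext
        intro s
        rcases eq_or_ne s i with rfl | hs
        · simp only [Finsupp.add_apply, Finsupp.tsub_apply, hji, Finsupp.single_eq_same]
          omega
        · have h1 : (Finsupp.single i 1) s = 0 :=
            Finsupp.single_eq_of_ne (fun hh => hs hh)
          simp only [Finsupp.add_apply, Finsupp.tsub_apply, h1]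
          omega
      rw [key m, hm', coeff_X_mul_add]
      apply ih
      rw [Finsupp.add_apply, Finsupp.tsub_apply, hji, Finsupp.single_eq_same]
      omega
  apply MvPowerSeries.ext
  intro m
  rw [map_zero]
  exact main (m i) m rfl
lemma cc_pair {n : ℕ} {u v : MvPowerSeries (Fin n) S}
    (hu : MvPowerSeries.constantCoeff u = 0)
    (hv : MvPowerSeries.constantCoeff v = 0) :
    ∀ t, MvPowerSeries.constantCoeff (![u, v] t) = 0 := by
  intro t
  fin_cases t <;> simpa

lemma cc_single {n : ℕ} {u : MvPowerSeries (Fin n) S}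
    (hu : MvPowerSeries.constantCoeff u = 0) :
    ∀ t, MvPowerSeries.constantCoeff (![u] t) = 0 := by
  intro t
  fin_cases t <;> simpa

lemma cc_triple {n : ℕ} {u v w : MvPowerSeries (Fin n) S}
    (hu : MvPowerSeries.constantCoeff u = 0)
    (hv : MvPowerSeries.constantCoeff v = 0)
    (hw : MvPowerSeries.constantCoeff w = 0) :
    ∀ t, MvPowerSeries.constantCoeff (![u, v, w] t) = 0 := by
  intro t
  fin_cases t <;> simpa

lemma msubst_pair {l n : ℕ} (b : Fin l → MvPowerSeries (Fin n) S)
    (u v : MvPowerSeries (Fin l) S) :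
    (fun t => msubst b (![u, v] t)) = ![msubst b u, msubst b v] := by
  funext t
  fin_cases t <;> simp

lemma msubst_single {l n : ℕ} (b : Fin l → MvPowerSeries (Fin n) S)
    (u : MvPowerSeries (Fin l) S) :
    (fun t => msubst b (![u] t)) = ![msubst b u] := by
  funext t
  fin_cases t <;> simp

section Group

variable {F : MvPowerSeries (Fin 2) S} {ι : MvPowerSeries (Fin 1) S}
  (hF : IsFormalGroupLaw F) (hι : IsFormalInverse F ι)

include hF

lemma cc_fadd {n : ℕ} (a b : MvPowerSeries (Fin n) S) :
    MvPowerSeries.constantCoeff (msubst ![a, b] F) = 0 := by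
  rw [constantCoeff_msubst]; exact hF.1

omit hF

lemma cc_fneg (hι : IsFormalInverse F ι) {n : ℕ} (a : MvPowerSeries (Fin n) S) :
    MvPowerSeries.constantCoeff (msubst ![a] ι) = 0 := by
  rw [constantCoeff_msubst]; exact hι.1

include hF

lemma fadd_comm {n : ℕ} {a b : MvPowerSeries (Fin n) S}
    (ha : MvPowerSeries.constantCoeff a = 0)
    (hb : MvPowerSeries.constantCoeff b = 0) :
    msubst ![a, b] F = msubst ![b, a] F := by
  conv_lhs => rw [← hF.2.1]
  rw [msubst_comp (fun t => by fin_cases t <;> simp [MvPowerSeries.constantCoeff_X])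
    (cc_pair ha hb), msubst_pair,
    msubst_X (a := ![a, b]) 1 (by simpa), msubst_X (a := ![a, b]) 0 (by simpa)]
  simp only [Matrix.cons_val_one, Matrix.head_cons, Matrix.cons_val_zero]

lemma fadd_zero {n : ℕ} {a : MvPowerSeries (Fin n) S}
    (ha : MvPowerSeries.constantCoeff a = 0) :
    msubst ![a, 0] F = a := by
  have h := msubst_comp (a := ![(MvPowerSeries.X 0 : MvPowerSeries (Fin 2) S), 0])
    (b := ![a, a])
    (fun t => by fin_cases t <;> simp [MvPowerSeries.constantCoeff_X])
    (cc_pair ha ha) F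
  rw [hF.2.2.1, msubst_X (a := ![a, a]) 0 (by simpa)] at h
  rw [msubst_pair, msubst_zero, msubst_X (a := ![a, a]) 0 (by simpa)] at h
  simp only [Matrix.cons_val_zero] at h
  exact h.symm

lemma fadd_assoc {n : ℕ} {a b c : MvPowerSeries (Fin n) S}
    (ha : MvPowerSeries.constantCoeff a = 0)
    (hb : MvPowerSeries.constantCoeff b = 0)
    (hc : MvPowerSeries.constantCoeff c = 0) :
    msubst ![msubst ![a, b] F, c] F = msubst ![a, msubst ![b, c] F] F := by
  have hX3 : ∀ t, MvPowerSeries.constantCoeff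
      (![msubst ![(MvPowerSeries.X 0 : MvPowerSeries (Fin 3) S), MvPowerSeries.X 1] F,
        MvPowerSeries.X 2] t) = 0 := by
    intro t
    fin_cases t
    · show MvPowerSeries.constantCoeff (msubst _ F) = 0
      rw [constantCoeff_msubst]; exact hF.1
    · simp [MvPowerSeries.constantCoeff_X]
  have hX3' : ∀ t, MvPowerSeries.constantCoeff
      (![(MvPowerSeries.X 0 : MvPowerSeries (Fin 3) S),
        msubst ![(MvPowerSeries.X 1 : MvPowerSeries (Fin 3) S), MvPowerSeries.X 2] F] t) = 0 := by
    intro t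
    fin_cases t
    · simp [MvPowerSeries.constantCoeff_X]
    · show MvPowerSeries.constantCoeff (msubst _ F) = 0
      rw [constantCoeff_msubst]; exact hF.1
  have habc := cc_triple ha hb hc
  have hXcc : ∀ s : Fin 3, MvPowerSeries.constantCoeff (MvPowerSeries.X s) = 0 :=
    fun s => MvPowerSeries.constantCoeff_X s
  have hL := msubst_comp (a := ![msubst ![(MvPowerSeries.X 0 : MvPowerSeries (Fin 3) S),
      MvPowerSeries.X 1] F, MvPowerSeries.X 2]) (b := ![a, b, c]) hX3 habc F
  have hR := msubst_comp (a := ![(MvPowerSeries.X 0 : MvPowerSeries (Fin 3) S),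
      msubst ![(MvPowerSeries.X 1 : MvPowerSeries (Fin 3) S), MvPowerSeries.X 2] F])
      (b := ![a, b, c]) hX3' habc F
  have hinner1 : msubst ![a, b, c] (msubst ![(MvPowerSeries.X 0 : MvPowerSeries (Fin 3) S),
      MvPowerSeries.X 1] F) = msubst ![a, b] F := by
    rw [msubst_comp (fun t => by fin_cases t <;> simp [MvPowerSeries.constantCoeff_X]) habc,
      msubst_pair, msubst_X (a := ![a, b, c]) 0 (by simpa),
      msubst_X (a := ![a, b, c]) 1 (by simpa)]
    simp only [Matrix.cons_val_zero, Matrix.cons_val_one, Matrix.head_cons]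
  have hinner2 : msubst ![a, b, c] (msubst ![(MvPowerSeries.X 1 : MvPowerSeries (Fin 3) S),
      MvPowerSeries.X 2] F) = msubst ![b, c] F := by
    rw [msubst_comp (fun t => by fin_cases t <;> simp [MvPowerSeries.constantCoeff_X]) habc,
      msubst_pair, msubst_X (a := ![a, b, c]) 1 (by simpa),
      msubst_X (a := ![a, b, c]) 2 (by simpa)]
    simp only [Matrix.cons_val_one, Matrix.head_cons, Matrix.cons_val_two, Matrix.tail_cons,
      Matrix.cons_val_zero]
  rw [msubst_pair, hinner1, msubst_X (a := ![a, b, c]) 2 (by simpa)] at hL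
  rw [msubst_pair, hinner2, msubst_X (a := ![a, b, c]) 0 (by simpa)] at hR
  simp only [Matrix.cons_val_zero, Matrix.cons_val_two, Matrix.tail_cons,
    Matrix.head_cons] at hL hR
  rw [← hL, ← hR, hF.2.2.2]

include hι

lemma fadd_neg {n : ℕ} {a : MvPowerSeries (Fin n) S}
    (ha : MvPowerSeries.constantCoeff a = 0) :
    msubst ![a, msubst ![a] ι] F = 0 := by
  have h := msubst_comp (a := ![(MvPowerSeries.X 0 : MvPowerSeries (Fin 1) S), ι])
    (b := ![a]) (fun t => by fin_cases t <;> simp [MvPowerSeries.constantCoeff_X, hι.1])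
    (cc_single ha) F
  rw [hι.2, msubst_zero, msubst_pair, msubst_X (a := ![a]) 0 (by simpa)] at h
  simp only [Matrix.cons_val_zero] at h
  exact h.symm

end Group
section Group2

variable {F : MvPowerSeries (Fin 2) S} {ι : MvPowerSeries (Fin 1) S}

lemma nu_aux (hF : IsFormalGroupLaw F) (hι : IsFormalInverse F ι) {n : ℕ}
    {b c : MvPowerSeries (Fin n) S}
    (hb : MvPowerSeries.constantCoeff b = 0)
    (hc : MvPowerSeries.constantCoeff c = 0) :
    msubst ![msubst ![c] ι, msubst ![msubst ![b] ι, c] F] F = msubst ![b] ι := by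
  have hnb := cc_fneg hι b
  have hnc := cc_fneg hι c
  calc msubst ![msubst ![c] ι, msubst ![msubst ![b] ι, c] F] F
      = msubst ![msubst ![msubst ![c] ι, msubst ![b] ι] F, c] F :=
        (fadd_assoc hF hnc hnb hc).symm
    _ = msubst ![msubst ![msubst ![b] ι, msubst ![c] ι] F, c] F := by
        rw [fadd_comm hF hnc hnb]
    _ = msubst ![msubst ![b] ι, msubst ![msubst ![c] ι, c] F] F :=
        fadd_assoc hF hnb hnc hc
    _ = msubst ![msubst ![b] ι, msubst ![c, msubst ![c] ι] F] F := by
        rw [fadd_comm hF hnc hc]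
    _ = msubst ![msubst ![b] ι, 0] F := by rw [fadd_neg hF hι hc]
    _ = msubst ![b] ι := fadd_zero hF hnb

lemma nu_unique (hF : IsFormalGroupLaw F) (hι : IsFormalInverse F ι) {n : ℕ}
    {x u : MvPowerSeries (Fin n) S}
    (hx : MvPowerSeries.constantCoeff x = 0)
    (hu : MvPowerSeries.constantCoeff u = 0)
    (h : msubst ![x, u] F = 0) : u = msubst ![x] ι := by
  have hnx := cc_fneg hι x
  calc u = msubst ![u, 0] F := (fadd_zero hF hu).symm
    _ = msubst ![u, msubst ![x, msubst ![x] ι] F] F := by rw [fadd_neg hF hι hx]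
    _ = msubst ![msubst ![u, x] F, msubst ![x] ι] F := (fadd_assoc hF hu hx hnx).symm
    _ = msubst ![msubst ![x, u] F, msubst ![x] ι] F := by rw [fadd_comm hF hu hx]
    _ = msubst ![0, msubst ![x] ι] F := by rw [h]
    _ = msubst ![x] ι := (fadd_comm hF (map_zero _) hnx).trans (fadd_zero hF hnx)

lemma nu_fadd (hF : IsFormalGroupLaw F) (hι : IsFormalInverse F ι) {n : ℕ}
    {b c : MvPowerSeries (Fin n) S}
    (hb : MvPowerSeries.constantCoeff b = 0)
    (hc : MvPowerSeries.constantCoeff c = 0) :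
    msubst ![msubst ![b, msubst ![c] ι] F] ι = msubst ![msubst ![b] ι, c] F := by
  have hnb := cc_fneg hι b
  have hnc := cc_fneg hι c
  have hbc : MvPowerSeries.constantCoeff (msubst ![b, msubst ![c] ι] F) = 0 :=
    cc_fadd hF _ _
  have hnbc : MvPowerSeries.constantCoeff (msubst ![msubst ![b] ι, c] F) = 0 :=
    cc_fadd hF _ _
  have h : msubst ![msubst ![b, msubst ![c] ι] F, msubst ![msubst ![b] ι, c] F] F = 0 := by
    calc msubst ![msubst ![b, msubst ![c] ι] F, msubst ![msubst ![b] ι, c] F] F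
        = msubst ![b, msubst ![msubst ![c] ι, msubst ![msubst ![b] ι, c] F] F] F :=
          fadd_assoc hF hb hnc hnbc
      _ = msubst ![b, msubst ![b] ι] F := by rw [nu_aux hF hι hb hc]
      _ = 0 := fadd_neg hF hι hb
  exact (nu_unique hF hι hbc hnbc h).symm

lemma fsub_fsub (hF : IsFormalGroupLaw F) (hι : IsFormalInverse F ι) {n : ℕ}
    {a b c : MvPowerSeries (Fin n) S}
    (ha : MvPowerSeries.constantCoeff a = 0)
    (hb : MvPowerSeries.constantCoeff b = 0)
    (hc : MvPowerSeries.constantCoeff c = 0) :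
    fsub F ι (fsub F ι a c) (fsub F ι b c) = fsub F ι a b := by
  have hnb := cc_fneg hι b
  have hnc := cc_fneg hι c
  have hnbc : MvPowerSeries.constantCoeff (msubst ![msubst ![b] ι, c] F) = 0 :=
    cc_fadd hF _ _
  show msubst ![msubst ![a, msubst ![c] ι] F,
      msubst ![msubst ![b, msubst ![c] ι] F] ι] F = msubst ![a, msubst ![b] ι] F
  calc msubst ![msubst ![a, msubst ![c] ι] F, msubst ![msubst ![b, msubst ![c] ι] F] ι] F
      = msubst ![msubst ![a, msubst ![c] ι] F, msubst ![msubst ![b] ι, c] F] F := by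
        rw [nu_fadd hF hι hb hc]
    _ = msubst ![a, msubst ![msubst ![c] ι, msubst ![msubst ![b] ι, c] F] F] F :=
        fadd_assoc hF ha hnc hnbc
    _ = msubst ![a, msubst ![b] ι] F := by rw [nu_aux hF hι hb hc]

lemma hg_subst (hι : IsFormalInverse F ι) {g : MvPowerSeries (Fin 2) S}
    (hg : (MvPowerSeries.X 0 : MvPowerSeries (Fin 2) S) - MvPowerSeries.X 1
      = fsub F ι (MvPowerSeries.X 0) (MvPowerSeries.X 1) * g)
    {n : ℕ} {x y : MvPowerSeries (Fin n) S}
    (hx : MvPowerSeries.constantCoeff x = 0)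
    (hy : MvPowerSeries.constantCoeff y = 0) :
    x - y = fsub F ι x y * gsub g x y := by
  have h := congrArg (msubst ![x, y]) hg
  rw [msubst_sub, msubst_X (a := ![x, y]) 0 (by simpa), msubst_X (a := ![x, y]) 1 (by simpa),
    msubst_mul (cc_pair hx hy)] at h
  simp only [Matrix.cons_val_zero, Matrix.cons_val_one, Matrix.head_cons] at h
  have hfs : msubst ![x, y] (fsub F ι (MvPowerSeries.X 0) (MvPowerSeries.X 1))
      = fsub F ι x y := by
    show msubst ![x, y] (msubst ![MvPowerSeries.X 0, fneg ι (MvPowerSeries.X 1)] F) = _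
    have hccinner : ∀ t, MvPowerSeries.constantCoeff
        (![(MvPowerSeries.X 0 : MvPowerSeries (Fin 2) S), fneg ι (MvPowerSeries.X 1)] t)
          = 0 := by
      intro t
      fin_cases t
      · simpa using MvPowerSeries.constantCoeff_X (0 : Fin 2)
      · show MvPowerSeries.constantCoeff (msubst ![MvPowerSeries.X 1] ι) = 0
        exact cc_fneg hι _
    rw [msubst_comp hccinner (cc_pair hx hy), msubst_pair,
      msubst_X (a := ![x, y]) 0 (by simpa)]
    have h2 : msubst ![x, y] (fneg ι (MvPowerSeries.X 1)) = fneg ι y := by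
      show msubst ![x, y] (msubst ![MvPowerSeries.X 1] ι) = _
      rw [msubst_comp (cc_single (MvPowerSeries.constantCoeff_X _)) (cc_pair hx hy),
        msubst_single, msubst_X (a := ![x, y]) 1 (by simpa)]
      simp only [Matrix.cons_val_one, Matrix.head_cons]
      rfl
    rw [h2]
    simp only [Matrix.cons_val_zero]
    rfl
  rw [hfs] at h
  exact h

lemma isUnit_gsub {g : MvPowerSeries (Fin 2) S} (hgu : IsUnit g) {n : ℕ}
    {x y : MvPowerSeries (Fin n) S}
    (hx : MvPowerSeries.constantCoeff x = 0)
    (hy : MvPowerSeries.constantCoeff y = 0) :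
    IsUnit (gsub g x y) := by
  have h : gsub g x y = msubstHom ![x, y] (cc_pair hx hy) g := rfl
  rw [h]
  exact hgu.map _

end Group2
end FGL
end Aux

/-- `∂'_i(x_{i+1} −_F x_{i+2})` equals
`−g(x_i,x_{i+1})⁻¹·g(x_{i+1},x_i)·g(x_i −_F x_{i+2}, x_{i+1} −_F x_{i+2})`,
and in particular it is a unit of `R`. -/
theorem demazure'_of_fsub_invertible
    (F : MvPowerSeries (Fin 2) S) (hF : IsFormalGroupLaw F)
    (ι : MvPowerSeries (Fin 1) S) (hι : IsFormalInverse F ι)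
    (g : MvPowerSeries (Fin 2) S)
    (hg : (X 0 : MvPowerSeries (Fin 2) S) - X 1 = fsub F ι (X 0) (X 1) * g)
    (hgu : IsUnit g)
    {n : ℕ} (i j k : Fin n) (hij : (i : ℕ) + 1 = (j : ℕ)) (hjk : (j : ℕ) + 1 = (k : ℕ))
    (Dem' : MvPowerSeries (Fin n) S → MvPowerSeries (Fin n) S)
    (hDem' : ∀ f, fsub F ι (X j : MvPowerSeries (Fin n) S) (X i) * Dem' f
                    = swapVars i j f - f) :
    Dem' (fsub F ι (X j : MvPowerSeries (Fin n) S) (X k))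
      = -(Ring.inverse (gsub g (X i : MvPowerSeries (Fin n) S) (X j))
          * gsub g (X j : MvPowerSeries (Fin n) S) (X i)
          * gsub g (fsub F ι (X i : MvPowerSeries (Fin n) S) (X k))
                   (fsub F ι (X j : MvPowerSeries (Fin n) S) (X k))) ∧
    IsUnit (Dem' (fsub F ι (X j : MvPowerSeries (Fin n) S) (X k))) := by
  classical
  have hij' : i ≠ j := Fin.ne_of_val_ne (by omega)
  have hik : i ≠ k := Fin.ne_of_val_ne (by omega)
  have hjk' : j ≠ k := Fin.ne_of_val_ne (by omega)
  have hcA : MvPowerSeries.constantCoeff (X i : MvPowerSeries (Fin n) S) = 0 :=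
    MvPowerSeries.constantCoeff_X i
  have hcB : MvPowerSeries.constantCoeff (X j : MvPowerSeries (Fin n) S) = 0 :=
    MvPowerSeries.constantCoeff_X j
  have hcC : MvPowerSeries.constantCoeff (X k : MvPowerSeries (Fin n) S) = 0 :=
    MvPowerSeries.constantCoeff_X k
  have ccfsub : ∀ {x y : MvPowerSeries (Fin n) S},
      MvPowerSeries.constantCoeff x = 0 →
      MvPowerSeries.constantCoeff y = 0 →
      MvPowerSeries.constantCoeff (fsub F ι x y) = 0 := by
    intro x y _ _
    show MvPowerSeries.constantCoeff (msubst ![x, fneg ι y] F) = 0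
    rw [FGL.constantCoeff_msubst]
    exact hF.1
  have hswap : swapVars i j (fsub F ι (X j : MvPowerSeries (Fin n) S) (X k))
      = fsub F ι (X i) (X k) := by
    show swapVars i j (msubst ![(X j : MvPowerSeries (Fin n) S), fneg ι (X k)] F)
      = msubst ![(X i : MvPowerSeries (Fin n) S), fneg ι (X k)] F
    have hcc' : ∀ t, MvPowerSeries.constantCoeff
        (![(X j : MvPowerSeries (Fin n) S), fneg ι (X k)] t) = 0 := by
      intro t
      fin_cases t
      · simpa using hcB
      · show MvPowerSeries.constantCoeff (msubst ![(X k : MvPowerSeries (Fin n) S)] ι) = 0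
        exact FGL.cc_fneg hι _
    rw [FGL.swapVars_msubst i j hcc' F]
    have hfun : (fun t => swapVars i j (![(X j : MvPowerSeries (Fin n) S), fneg ι (X k)] t))
        = ![(X i : MvPowerSeries (Fin n) S), fneg ι (X k)] := by
      funext t
      fin_cases t
      · show swapVars i j (X j) = (X i : MvPowerSeries (Fin n) S)
        rw [FGL.swapVars_X, Equiv.swap_apply_right]
      · show swapVars i j (msubst ![(X k : MvPowerSeries (Fin n) S)] ι)
          = msubst ![(X k : MvPowerSeries (Fin n) S)] ι
        rw [FGL.swapVars_msubst i j (FGL.cc_single hcC) ι]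
        have hone : (fun t => swapVars i j (![(X k : MvPowerSeries (Fin n) S)] t))
            = ![(X k : MvPowerSeries (Fin n) S)] := by
          funext t
          fin_cases t
          show swapVars i j (X k) = (X k : MvPowerSeries (Fin n) S)
          rw [FGL.swapVars_X, Equiv.swap_apply_of_ne_of_ne (Ne.symm hik) (Ne.symm hjk')]
        rw [hone]
    rw [hfun]
  have h1 : ∀ {x y : MvPowerSeries (Fin n) S},
      MvPowerSeries.constantCoeff x = 0 →
      MvPowerSeries.constantCoeff y = 0 →
      x - y = fsub F ι x y * gsub g x y := fun hx hy => FGL.hg_subst hι hg hx hy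
  have hUab : IsUnit (gsub g (X i : MvPowerSeries (Fin n) S) (X j)) :=
    FGL.isUnit_gsub hgu hcA hcB
  have hUba : IsUnit (gsub g (X j : MvPowerSeries (Fin n) S) (X i)) :=
    FGL.isUnit_gsub hgu hcB hcA
  have hUE : IsUnit (gsub g (fsub F ι (X i : MvPowerSeries (Fin n) S) (X k))
      (fsub F ι (X j : MvPowerSeries (Fin n) S) (X k))) :=
    FGL.isUnit_gsub hgu (ccfsub hcA hcC) (ccfsub hcB hcC)
  have hD := hDem' (fsub F ι (X j : MvPowerSeries (Fin n) S) (X k))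
  rw [hswap] at hD
  have h3 : fsub F ι (fsub F ι (X i : MvPowerSeries (Fin n) S) (X k))
      (fsub F ι (X j : MvPowerSeries (Fin n) S) (X k)) = fsub F ι (X i) (X j) :=
    FGL.fsub_fsub hF hι hcA hcB hcC
  have hE := h1 (ccfsub hcA hcC) (ccfsub hcB hcC)
  rw [h3] at hE
  have hAB := h1 hcA hcB
  have hBA := h1 hcB hcA
  have key : fsub F ι (X i : MvPowerSeries (Fin n) S) (X j) * gsub g (X i) (X j)
      = -(fsub F ι (X j : MvPowerSeries (Fin n) S) (X i) * gsub g (X j) (X i)) := by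
    rw [← hAB, ← hBA]
    ring
  have hcancel : ∀ u v : MvPowerSeries (Fin n) S,
      fsub F ι (X j : MvPowerSeries (Fin n) S) (X i) * u
        = fsub F ι (X j : MvPowerSeries (Fin n) S) (X i) * v → u = v := by
    intro u v huv
    have hz : fsub F ι (X j : MvPowerSeries (Fin n) S) (X i) * (u - v) = 0 := by
      rw [mul_sub, huv, sub_self]
    have h0 : ((X j : MvPowerSeries (Fin n) S) - X i) * (u - v) = 0 := by
      rw [hBA]
      calc fsub F ι (X j : MvPowerSeries (Fin n) S) (X i) * gsub g (X j) (X i) * (u - v)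
          = gsub g (X j : MvPowerSeries (Fin n) S) (X i)
            * (fsub F ι (X j : MvPowerSeries (Fin n) S) (X i) * (u - v)) := by ring
        _ = 0 := by rw [hz, mul_zero]
    exact sub_eq_zero.mp (FGL.X_sub_X_regular hij' h0)
  have h6 : gsub g (X i : MvPowerSeries (Fin n) S) (X j)
      * Ring.inverse (gsub g (X i : MvPowerSeries (Fin n) S) (X j)) = 1 :=
    Ring.mul_inverse_cancel _ hUab
  have hmain : fsub F ι (X j : MvPowerSeries (Fin n) S) (X i)
        * Dem' (fsub F ι (X j : MvPowerSeries (Fin n) S) (X k))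
      = fsub F ι (X j : MvPowerSeries (Fin n) S) (X i) *
        -(Ring.inverse (gsub g (X i : MvPowerSeries (Fin n) S) (X j))
          * gsub g (X j : MvPowerSeries (Fin n) S) (X i)
          * gsub g (fsub F ι (X i : MvPowerSeries (Fin n) S) (X k))
                   (fsub F ι (X j : MvPowerSeries (Fin n) S) (X k))) := by
    rw [hD, hE]
    linear_combination
      (Ring.inverse (gsub g (X i : MvPowerSeries (Fin n) S) (X j))
        * gsub g (fsub F ι (X i : MvPowerSeries (Fin n) S) (X k))
            (fsub F ι (X j : MvPowerSeries (Fin n) S) (X k))) * key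
      - (fsub F ι (X i : MvPowerSeries (Fin n) S) (X j)
        * gsub g (fsub F ι (X i : MvPowerSeries (Fin n) S) (X k))
            (fsub F ι (X j : MvPowerSeries (Fin n) S) (X k))) * h6
  have hfinal := hcancel _ _ hmain
  refine ⟨hfinal, ?_⟩
  rw [hfinal]
  exact (((isUnit_ringInverse.mpr hUab).mul hUba).mul hUE).neg

end
end
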